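/- arXiv:math/9411221 — 2 statements merged into one kernel-verified Lean document; each statement's English description precedes it below -/
import Mathlib

section
/- Let 𝒢 = 𝒢(G,H,S) be a strongly connected Cayley coset digraph whose generators are distinct double-coset representatives. Let R₁ and R₂ be a partition of S (R₁ ∪ R₂ = S, R₁ ∩ R₂ = ∅) such that the subgroup G' generated by H ∪ R₁ contains no element of R₂. Let 𝒢' = 𝒢(G',H,R₁). Suppose that for all r, s ∈ R₂, if G'rG' = G'sG' then the subgroup generated by H ∪ {r} equals the subgroup generated by H ∪ {s}. Then κ(𝒢) ≥ min(|G'/H|, κ(𝒢') + d_{R₂}), where d_{R₂} = Σ_{s∈R₂} |HsH/H|. -/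
open Classical

/-- A digraph (given by its edge relation `E`) is strongly connected iff for every
ordered pair of vertices there is a directed path from the first to the second. -/
def SC {V : Type*} (E : V → V → Prop) : Prop :=
  ∀ a b : V, Relation.ReflTransGen E a b

/-- The subdigraph induced on `A` is strongly connected. -/
def SCOn {V : Type*} (E : V → V → Prop) (A : Set V) : Prop :=
  ∀ a ∈ A, ∀ b ∈ A, Relation.ReflTransGen (fun x y => x ∈ A ∧ y ∈ A ∧ E x y) a b

/-- Out-neighborhood of a set of vertices. -/
def Nout {V : Type*} (E : V → V → Prop) (A : Set V) : Set V :=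
  {x | x ∉ A ∧ ∃ y ∈ A, E y x}

/-- Vertex connectivity: the least cardinality of a set `T` of vertices whose removal
leaves a non-strongly-connected digraph; `Nat.card V - 1` if no such `T` exists. -/
noncomputable def kappa {V : Type*} [Finite V] (E : V → V → Prop) : ℕ :=
  if ∃ T : Set V, ¬ SCOn E Tᶜ then
    sInf {m | ∃ T : Set V, T.ncard = m ∧ ¬ SCOn E Tᶜ}
  else Nat.card V - 1

/-- A part of a digraph. -/
def IsPart {V : Type*} (E : V → V → Prop) (A : Set V) : Prop :=
  A.Nonempty ∧ ((A ∪ Nout E A)ᶜ : Set V).Nonempty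

/-- An atom: a part with `|N(A)| = κ` of minimum cardinality among such parts. -/
def IsAtomD {V : Type*} [Finite V] (E : V → V → Prop) (A : Set V) : Prop :=
  IsPart E A ∧ (Nout E A).ncard = kappa E ∧
    ∀ B : Set V, IsPart E B → (Nout E B).ncard = kappa E → A.ncard ≤ B.ncard
/-- The double coset `K s K`. -/
def dcoset {G : Type*} [Group G] (K : Subgroup G) (s : G) : Set G :=
  {g | ∃ h₁ ∈ K, ∃ h₂ ∈ K, g = h₁ * s * h₂}

/-- Edge relation of the Cayley coset digraph `𝒢(G,H,S)` on the left cosets `G ⧸ H`: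
there is an edge from `g₁H` to `g₂H` iff `g₁⁻¹g₂ ∈ HsH` for some `s ∈ S`
(equivalently, `g₁Hs ∩ g₂H ≠ ∅`). -/
def cayleyRel {G : Type*} [Group G] (H : Subgroup G) (S : Set G) :
    G ⧸ H → G ⧸ H → Prop :=
  fun x y => ∃ s ∈ S, ∃ g₁ g₂ : G, (g₁ : G ⧸ H) = x ∧ (g₂ : G ⧸ H) = y ∧
    g₁⁻¹ * g₂ ∈ dcoset H s

/-- `d_s = |HsH/H|`, the number of left cosets of `H` contained in `HsH`. -/
noncomputable def dval {G : Type*} [Group G] (H : Subgroup G) (s : G) : ℕ :=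
  ((QuotientGroup.mk '' dcoset H s : Set (G ⧸ H))).ncard



open Classical Relation
set_option linter.unusedSectionVars false

namespace CCD

variable {V : Type*} [Finite V] {E : V → V → Prop}

lemma rtg_rev {r : V → V → Prop} {a b : V} (h : ReflTransGen r a b) :
    ReflTransGen (fun x y => r y x) b a := by
  induction h with
  | refl => exact .refl
  | tail _ h2 ih => exact ReflTransGen.head h2 ih

lemma scon_flip {A : Set V} (h : SCOn E A) : SCOn (flip E) A := by
  intro a ha b hb
  exact ReflTransGen.mono (fun x y hxy => ⟨hxy.2.1, hxy.1, hxy.2.2⟩) _ _ (rtg_rev (h b hb a ha))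

lemma scon_flip_iff {A : Set V} : SCOn (flip E) A ↔ SCOn E A :=
  ⟨fun h => scon_flip h, fun h => scon_flip h⟩

lemma kappa_flip : kappa (flip E) = kappa E := by
  have hs : (∃ T : Set V, ¬ SCOn (flip E) Tᶜ) = (∃ T : Set V, ¬ SCOn E Tᶜ) := by
    simp only [scon_flip_iff]
  have hs2 : {m | ∃ T : Set V, T.ncard = m ∧ ¬ SCOn (flip E) Tᶜ} =
      {m | ∃ T : Set V, T.ncard = m ∧ ¬ SCOn E Tᶜ} := by
    simp only [scon_flip_iff]
  unfold kappa; rw [hs, hs2]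

lemma exists_pair_of_not_SCOn {A : Set V} (h : ¬ SCOn E A) :
    ∃ a ∈ A, ∃ b ∈ A, ¬ ReflTransGen (fun x y => x ∈ A ∧ y ∈ A ∧ E x y) a b := by
  by_contra hc; push_neg at hc; exact h fun a ha b hb => hc a ha b hb

lemma kappa_le_of_not_SCOn {T : Set V} (hT : ¬ SCOn E Tᶜ) : kappa E ≤ T.ncard := by
  rw [kappa, if_pos ⟨T, hT⟩]
  exact Nat.sInf_le ⟨T, rfl, hT⟩

lemma not_SCOn_compl_Nout {A : Set V} (hA : IsPart E A) : ¬ SCOn E (Nout E A)ᶜ := by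
  obtain ⟨⟨a, ha⟩, ⟨b, hb⟩⟩ := hA
  intro h
  have hac : a ∈ (Nout E A)ᶜ := fun hc => hc.1 ha
  have hbc : b ∈ (Nout E A)ᶜ := fun hc => hb (Or.inr hc)
  have hpath := h a hac b hbc
  have key : ∀ x, ReflTransGen (fun x y => x ∈ (Nout E A)ᶜ ∧ y ∈ (Nout E A)ᶜ ∧ E x y) a x →
      x ∈ A := by
    intro x hx
    induction hx with
    | refl => exact ha
    | tail _ step ih =>
      rcases step with ⟨_, hyc, hE⟩
      by_contra hyA
      exact hyc ⟨hyA, _, ih, hE⟩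
  exact hb (Or.inl (key b hpath))

lemma kappa_le_part {A : Set V} (hA : IsPart E A) : kappa E ≤ (Nout E A).ncard :=
  kappa_le_of_not_SCOn (not_SCOn_compl_Nout hA)

lemma exists_part_of_not_SCOn {T : Set V} (hT : ¬ SCOn E Tᶜ) :
    ∃ A : Set V, IsPart E A ∧ Nout E A ⊆ T := by
  obtain ⟨a, ha, b, hb, hab⟩ := exists_pair_of_not_SCOn hT
  set R : V → V → Prop := fun x y => x ∈ Tᶜ ∧ y ∈ Tᶜ ∧ E x y with hR
  set A : Set V := {x | ReflTransGen R a x} with hA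
  have hsub : A ⊆ Tᶜ := by
    intro x hx
    induction hx with
    | refl => exact ha
    | tail _ step _ => exact step.2.1
  have hNout : Nout E A ⊆ T := by
    intro x hx
    rcases hx with ⟨hnx, y, hy, hE⟩
    by_contra hxT
    exact hnx (ReflTransGen.tail hy ⟨hsub hy, hxT, hE⟩)
  refine ⟨A, ⟨⟨a, ReflTransGen.refl⟩, ⟨b, fun hmem => ?_⟩⟩, hNout⟩
  rcases hmem with hmem | hmem
  · exact hab hmem
  · exact hb (hNout hmem)

lemma le_kappa (n : ℕ) (h1 : n ≤ Nat.card V - 1)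
    (h2 : ∀ A : Set V, IsPart E A → n ≤ (Nout E A).ncard) : n ≤ kappa E := by
  rw [kappa]
  split_ifs with h
  · refine le_csInf ?_ ?_
    · obtain ⟨T, hT⟩ := h; exact ⟨T.ncard, T, rfl, hT⟩
    · rintro m ⟨T, rfl, hT⟩
      obtain ⟨A, hA, hsub⟩ := exists_part_of_not_SCOn hT
      exact le_trans (h2 A hA) (Set.ncard_le_ncard hsub T.toFinite)
  · exact h1

lemma two_le_ncard {A : Set V} {a b : V} (ha : a ∈ A) (hb : b ∈ A) (hab : a ≠ b) :
    2 ≤ A.ncard := by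
  have : ({a, b} : Set V) ⊆ A := by
    intro x hx; rcases hx with rfl | rfl
    · exact ha
    · exact hb
  have h2 : ({a, b} : Set V).ncard = 2 := Set.ncard_pair hab
  rw [← h2]
  exact Set.ncard_le_ncard this A.toFinite

lemma kappa_le_card : kappa E ≤ Nat.card V - 1 := by
  rw [kappa]
  split_ifs with h
  · obtain ⟨T, hT⟩ := h
    have h2 : 2 ≤ Tᶜ.ncard := by
      obtain ⟨a, ha, b, hb, hab⟩ := exists_pair_of_not_SCOn hT
      have hne : a ≠ b := by rintro rfl; exact hab ReflTransGen.refl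
      exact two_le_ncard ha hb hne
    have hcompl := Set.ncard_add_ncard_compl T
    have hmem : T.ncard ∈ {m | ∃ T : Set V, T.ncard = m ∧ ¬ SCOn E Tᶜ} := ⟨T, rfl, hT⟩
    have := Nat.sInf_le hmem
    omega
  · exact le_refl _

/-! ### basic Nout/β algebra -/

lemma nout_disjoint (A : Set V) : Disjoint A (Nout E A) :=
  Set.disjoint_left.mpr (fun _ ha hn => hn.1 ha)

lemma card_beta (A : Set V) : (A ∪ Nout E A).ncard = A.ncard + (Nout E A).ncard :=
  Set.ncard_union_eq (nout_disjoint A) A.toFinite (Set.toFinite _)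

lemma beta_union (A B : Set V) :
    (A ∪ B) ∪ Nout E (A ∪ B) = (A ∪ Nout E A) ∪ (B ∪ Nout E B) := by
  ext x
  constructor
  · rintro (h | h)
    · rcases h with h | h
      · exact Or.inl (Or.inl h)
      · exact Or.inr (Or.inl h)
    · rcases h with ⟨hnx, y, hy, hE⟩
      rcases hy with hy | hy
      · exact Or.inl (Or.inr ⟨fun hc => hnx (Or.inl hc), y, hy, hE⟩)
      · exact Or.inr (Or.inr ⟨fun hc => hnx (Or.inr hc), y, hy, hE⟩)
  · rintro (h | h) <;> rcases h with h | h
    · exact Or.inl (Or.inl h)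
    · by_cases hx : x ∈ A ∪ B
      · exact Or.inl hx
      · rcases h with ⟨_, y, hy, hE⟩
        exact Or.inr ⟨hx, y, Or.inl hy, hE⟩
    · exact Or.inl (Or.inr h)
    · by_cases hx : x ∈ A ∪ B
      · exact Or.inl hx
      · rcases h with ⟨_, y, hy, hE⟩
        exact Or.inr ⟨hx, y, Or.inr hy, hE⟩

lemma beta_inter_subset (A B : Set V) :
    (A ∩ B) ∪ Nout E (A ∩ B) ⊆ (A ∪ Nout E A) ∩ (B ∪ Nout E B) := by
  rintro x (h | h)
  · exact ⟨Or.inl h.1, Or.inl h.2⟩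
  · rcases h with ⟨hnx, y, ⟨hyA, hyB⟩, hE⟩
    constructor
    · by_cases hx : x ∈ A
      · exact Or.inl hx
      · exact Or.inr ⟨hx, y, hyA, hE⟩
    · by_cases hx : x ∈ B
      · exact Or.inl hx
      · exact Or.inr ⟨hx, y, hyB, hE⟩

lemma nout_submod (A B : Set V) :
    (Nout E (A ∩ B)).ncard + (Nout E (A ∪ B)).ncard
      ≤ (Nout E A).ncard + (Nout E B).ncard := by
  have hle1 : ((A ∩ B) ∪ Nout E (A ∩ B)).ncard
      ≤ ((A ∪ Nout E A) ∩ (B ∪ Nout E B)).ncard :=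
    Set.ncard_le_ncard (beta_inter_subset A B) (Set.toFinite _)
  have heq : ((A ∪ B) ∪ Nout E (A ∪ B)).ncard
      = ((A ∪ Nout E A) ∪ (B ∪ Nout E B)).ncard := by rw [beta_union]
  have hiu := Set.ncard_inter_add_ncard_union (A ∪ Nout E A) (B ∪ Nout E B)
    (Set.toFinite _) (Set.toFinite _)
  have hiu2 := Set.ncard_inter_add_ncard_union A B A.toFinite B.toFinite
  have e1 := card_beta (E := E) A
  have e2 := card_beta (E := E) B
  have e3 := card_beta (E := E) (A ∩ B)
  have e4 := card_beta (E := E) (A ∪ B)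
  omega

lemma nout_inter_subset (A F : Set V) :
    Nout E (A ∩ F) ⊆ (Nout E A ∩ F) ∪ (Nout E A ∩ Nout E F) ∪ (A ∩ Nout E F) := by
  rintro x ⟨hnx, y, ⟨hyA, hyF⟩, hE⟩
  by_cases hxA : x ∈ A
  · have hxF : x ∉ F := fun h => hnx ⟨hxA, h⟩
    exact Or.inr ⟨hxA, hxF, y, hyF, hE⟩
  · have hxNA : x ∈ Nout E A := ⟨hxA, y, hyA, hE⟩
    by_cases hxF : x ∈ F
    · exact Or.inl (Or.inl ⟨hxNA, hxF⟩)
    · exact Or.inl (Or.inr ⟨hxNA, hxF, y, hyF, hE⟩)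

lemma ncard_split_three (X P Q : Set V) (hdis : Disjoint P Q) :
    X.ncard = (X ∩ P).ncard + (X ∩ Q).ncard + (X ∩ (P ∪ Q)ᶜ).ncard := by
  have hXeq : X = (X ∩ P) ∪ (X ∩ Q) ∪ (X ∩ (P ∪ Q)ᶜ) := by
    ext x
    constructor
    · intro hx
      by_cases hP : x ∈ P
      · exact Or.inl (Or.inl ⟨hx, hP⟩)
      · by_cases hQ : x ∈ Q
        · exact Or.inl (Or.inr ⟨hx, hQ⟩)
        · exact Or.inr ⟨hx, fun hc => hc.elim hP hQ⟩
    · rintro ((h | h) | h) <;> exact h.1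
  have hd1 : Disjoint (X ∩ P) (X ∩ Q) :=
    Set.disjoint_left.mpr (fun x hx hx' => (Set.disjoint_left.mp hdis) hx.2 hx'.2)
  have hd2 : Disjoint ((X ∩ P) ∪ (X ∩ Q)) (X ∩ (P ∪ Q)ᶜ) := by
    rw [Set.disjoint_left]
    rintro x (hx | hx) hx'
    · exact hx'.2 (Or.inl hx.2)
    · exact hx'.2 (Or.inr hx.2)
  conv_lhs => rw [hXeq]
  rw [Set.ncard_union_eq hd2 (Set.toFinite _) (Set.toFinite _),
    Set.ncard_union_eq hd1 (Set.toFinite _) (Set.toFinite _)]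

/-! ### atoms -/

lemma exists_atom (h : ∃ T : Set V, ¬ SCOn E Tᶜ) : ∃ A, IsAtomD E A := by
  have hκ : kappa E ∈ {m | ∃ T : Set V, T.ncard = m ∧ ¬ SCOn E Tᶜ} := by
    rw [kappa, if_pos h]
    exact Nat.sInf_mem (by obtain ⟨T, hT⟩ := h; exact ⟨T.ncard, T, rfl, hT⟩)
  obtain ⟨T, hTc, hT⟩ := hκ
  obtain ⟨A, hA, hsub⟩ := exists_part_of_not_SCOn hT
  have hAκ : (Nout E A).ncard = kappa E := by
    refine le_antisymm ?_ (kappa_le_part hA)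
    rw [← hTc]; exact Set.ncard_le_ncard hsub T.toFinite
  set s := {n | ∃ B : Set V, (IsPart E B ∧ (Nout E B).ncard = kappa E) ∧ B.ncard = n}
    with hs
  have hne : s.Nonempty := ⟨A.ncard, A, ⟨hA, hAκ⟩, rfl⟩
  obtain ⟨B, ⟨hB, hBκ⟩, hBn⟩ := Nat.sInf_mem hne
  refine ⟨B, hB, hBκ, fun C hC hCκ => ?_⟩
  rw [hBn]
  exact Nat.sInf_le ⟨C, ⟨hC, hCκ⟩, rfl⟩

lemma atom_ncard_eq {A B : Set V} (hA : IsAtomD E A) (hB : IsAtomD E B) :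
    A.ncard = B.ncard :=
  le_antisymm (hA.2.2 B hB.1 hB.2.1) (hB.2.2 A hA.1 hA.2.1)

/-! ### the co-part of a fragment, in the reversed digraph -/

lemma Nout_flip_compl_subset (F : Set V) :
    Nout (flip E) ((F ∪ Nout E F)ᶜ) ⊆ Nout E F := by
  rintro x ⟨hnx, y, hy, hE⟩
  rcases not_not.mp (fun hc => hnx hc) with hx | hx
  · exact absurd (Or.inr ⟨fun hyF => (hy (Or.inl hyF)).elim, x, hx, hE⟩ :
      y ∈ F ∪ Nout E F) hy
  · exact hx

lemma IsPart_flip_compl {F : Set V} (hF : IsPart E F) :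
    IsPart (flip E) ((F ∪ Nout E F)ᶜ) := by
  refine ⟨hF.2, ?_⟩
  obtain ⟨f, hf⟩ := hF.1
  refine ⟨f, fun hmem => ?_⟩
  rcases hmem with hmem | hmem
  · exact hmem (Or.inl hf)
  · exact (Nout_flip_compl_subset F hmem).1 hf

lemma copart_le {F : Set V} (hF : IsPart E F) (hFκ : (Nout E F).ncard = kappa E)
    {B : Set V} (hB : IsAtomD (flip E) B) : B.ncard ≤ ((F ∪ Nout E F)ᶜ).ncard := by
  have h1 : IsPart (flip E) ((F ∪ Nout E F)ᶜ) := IsPart_flip_compl hF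
  have h2 : (Nout (flip E) ((F ∪ Nout E F)ᶜ)).ncard = kappa (flip E) := by
    refine le_antisymm ?_ (kappa_le_part h1)
    rw [kappa_flip, ← hFκ]
    exact Set.ncard_le_ncard (Nout_flip_compl_subset F) (Set.toFinite _)
  exact hB.2.2 _ h1 h2

/-! ### Hamidoune's lemma -/

lemma atom_subset_fragment {A F : Set V} (hA : IsAtomD E A) (hF : IsPart E F)
    (hFκ : (Nout E F).ncard = kappa E) (hAF : (A ∩ F).Nonempty)
    (hsize : A.ncard ≤ ((F ∪ Nout E F)ᶜ).ncard) : A ⊆ F := by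
  have hAc := hA.2.1
  have hpart_inter : IsPart E (A ∩ F) := by
    refine ⟨hAF, ?_⟩
    obtain ⟨w, hw⟩ := hA.1.2
    exact ⟨w, fun hmem => hw (beta_inter_subset A F hmem).1⟩
  have hκinter : kappa E ≤ (Nout E (A ∩ F)).ncard := kappa_le_part hpart_inter
  by_cases hcase : (((A ∪ F) ∪ Nout E (A ∪ F))ᶜ : Set V).Nonempty
  · have hpart_union : IsPart E (A ∪ F) :=
      ⟨⟨hAF.choose, Or.inl hAF.choose_spec.1⟩, hcase⟩
    have hκunion := kappa_le_part hpart_union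
    have hsubm := nout_submod (E := E) A F
    have h1 : (Nout E (A ∩ F)).ncard = kappa E := by omega
    have h2 := hA.2.2 (A ∩ F) hpart_inter h1
    have h3 : A ∩ F = A :=
      Set.eq_of_subset_of_ncard_le Set.inter_subset_left h2 A.toFinite
    intro x hx
    rw [← h3] at hx
    exact hx.2
  · exfalso
    have huniv : (A ∪ Nout E A) ∪ (F ∪ Nout E F) = Set.univ := by
      rw [← beta_union]
      rw [Set.not_nonempty_iff_eq_empty, Set.compl_empty_iff] at hcase
      exact hcase
    set Fb := (F ∪ Nout E F)ᶜ with hFb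
    have hFbA : Fb ⊆ A ∪ Nout E A := by
      intro x hx
      have : x ∈ (A ∪ Nout E A) ∪ (F ∪ Nout E F) := huniv ▸ Set.mem_univ x
      exact this.resolve_right hx
    have hNA_split := ncard_split_three (Nout E A) F (Nout E F) (nout_disjoint (E := E) F)
    have hA_split := ncard_split_three A F (Nout E F) (nout_disjoint (E := E) F)
    rw [← hFb] at hNA_split hA_split
    have hbound : kappa E ≤ (Nout E A ∩ F).ncard + (Nout E A ∩ Nout E F).ncard
        + (A ∩ Nout E F).ncard := by
      refine le_trans hκinter ?_
      refine le_trans (Set.ncard_le_ncard (nout_inter_subset A F) (Set.toFinite _)) ?_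
      refine le_trans (Set.ncard_union_le _ _) ?_
      have := Set.ncard_union_le (Nout E A ∩ F) (Nout E A ∩ Nout E F)
      omega
    have h4 : Fb.ncard ≤ (A ∩ Fb).ncard + (Nout E A ∩ Fb).ncard := by
      refine le_trans (Set.ncard_le_ncard (fun x hx => ?_) (Set.toFinite _))
        (Set.ncard_union_le _ _)
      rcases hFbA hx with h | h
      · exact Or.inl ⟨h, hx⟩
      · exact Or.inr ⟨h, hx⟩
    have h6 : 0 < (A ∩ F).ncard := (Set.ncard_pos (Set.toFinite _)).mpr hAF
    omega

lemma atom_subset_fragment' {A F : Set V}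
    (hdir : ∀ B : Set V, IsAtomD (flip E) B → A.ncard ≤ B.ncard)
    (hA : IsAtomD E A) (hF : IsPart E F) (hFκ : (Nout E F).ncard = kappa E)
    (hAF : (A ∩ F).Nonempty) : A ⊆ F := by
  have hsep' : ∃ T : Set V, ¬ SCOn (flip E) Tᶜ :=
    ⟨_, not_SCOn_compl_Nout (IsPart_flip_compl hF)⟩
  obtain ⟨B, hB⟩ := exists_atom hsep'
  exact atom_subset_fragment hA hF hFκ hAF (le_trans (hdir B hB) (copart_le hF hFκ hB))

end CCD


open Classical Relation
set_option linter.unusedSectionVars false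

namespace CCD

/-! ### transport along an equivalence of digraphs -/

section Transport

variable {V W : Type*} [Finite V] [Finite W] {E : V → V → Prop} {E' : W → W → Prop}

lemma hE_symm (e : V ≃ W) (hE : ∀ x y : V, E' (e x) (e y) ↔ E x y) :
    ∀ x y : W, E (e.symm x) (e.symm y) ↔ E' x y := by
  intro x y
  constructor
  · intro h
    have := (hE (e.symm x) (e.symm y)).mpr h
    simpa using this
  · intro h
    exact (hE _ _).mp (by simpa using h)

lemma image_Nout (e : V ≃ W) (hE : ∀ x y : V, E' (e x) (e y) ↔ E x y) (A : Set V) :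
    Nout E' (e '' A) = e '' Nout E A := by
  ext w
  constructor
  · rintro ⟨hnw, y, ⟨v, hv, rfl⟩, hEvw⟩
    refine ⟨e.symm w, ⟨?_, v, hv, ?_⟩, by simp⟩
    · intro hc
      exact hnw ⟨e.symm w, hc, by simp⟩
    · have := hE v (e.symm w)
      rw [e.apply_symm_apply] at this
      exact this.mp hEvw
  · rintro ⟨x, ⟨hnx, y, hy, hEyx⟩, rfl⟩
    refine ⟨?_, e y, ⟨y, hy, rfl⟩, (hE y x).mpr hEyx⟩
    rintro ⟨v, hv, hev⟩
    exact hnx (e.injective hev ▸ hv)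

lemma rtg_image (e : V ≃ W) (hE : ∀ x y : V, E' (e x) (e y) ↔ E x y) {A : Set V} {a b : V}
    (h : ReflTransGen (fun x y => x ∈ A ∧ y ∈ A ∧ E x y) a b) :
    ReflTransGen (fun x y => x ∈ e '' A ∧ y ∈ e '' A ∧ E' x y) (e a) (e b) := by
  induction h with
  | refl => exact .refl
  | tail _ step ih =>
    exact ih.tail ⟨⟨_, step.1, rfl⟩, ⟨_, step.2.1, rfl⟩, (hE _ _).mpr step.2.2⟩

lemma scon_image (e : V ≃ W) (hE : ∀ x y : V, E' (e x) (e y) ↔ E x y) {A : Set V}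
    (h : SCOn E A) : SCOn E' (e '' A) := by
  rintro a ⟨x, hx, rfl⟩ b ⟨y, hy, rfl⟩
  exact rtg_image e hE (h x hx y hy)

lemma scon_image_iff (e : V ≃ W) (hE : ∀ x y : V, E' (e x) (e y) ↔ E x y) {A : Set V} :
    SCOn E' (e '' A) ↔ SCOn E A := by
  constructor
  · intro h
    have := scon_image e.symm (hE_symm e hE) h
    rwa [Equiv.symm_image_image] at this
  · exact scon_image e hE

lemma kappa_eq_of_equiv (e : V ≃ W) (hE : ∀ x y : V, E' (e x) (e y) ↔ E x y) :
    kappa E' = kappa E := by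
  have hTcorr : ∀ T : Set V, ¬ SCOn E Tᶜ → ¬ SCOn E' (e '' T)ᶜ := by
    intro T hT hc
    rw [← Equiv.image_compl] at hc
    exact hT ((scon_image_iff e hE).mp hc)
  have hTcorr' : ∀ T : Set W, ¬ SCOn E' Tᶜ → ¬ SCOn E (e.symm '' T)ᶜ := by
    intro T hT hc
    rw [← Equiv.image_compl] at hc
    exact hT ((scon_image_iff e.symm (hE_symm e hE)).mp hc)
  have hcond : (∃ T : Set W, ¬SCOn E' Tᶜ) ↔ (∃ T : Set V, ¬SCOn E Tᶜ) := by
    constructor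
    · rintro ⟨T, hT⟩; exact ⟨e.symm '' T, hTcorr' T hT⟩
    · rintro ⟨T, hT⟩; exact ⟨e '' T, hTcorr T hT⟩
  have hset : {m | ∃ T : Set W, T.ncard = m ∧ ¬SCOn E' Tᶜ}
      = {m | ∃ T : Set V, T.ncard = m ∧ ¬SCOn E Tᶜ} := by
    ext m
    constructor
    · rintro ⟨T, rfl, hT⟩
      exact ⟨e.symm '' T, Set.ncard_image_of_injective T e.symm.injective, hTcorr' T hT⟩
    · rintro ⟨T, rfl, hT⟩
      exact ⟨e '' T, Set.ncard_image_of_injective T e.injective, hTcorr T hT⟩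
  have hcard : Nat.card W = Nat.card V := Nat.card_congr e.symm
  unfold kappa
  by_cases h : ∃ T : Set V, ¬SCOn E Tᶜ
  · rw [if_pos (hcond.mpr h), if_pos h, hset]
  · rw [if_neg (fun hc => h (hcond.mp hc)), if_neg h, hcard]

lemma IsPart_image (e : V ≃ W) (hE : ∀ x y : V, E' (e x) (e y) ↔ E x y) {A : Set V}
    (h : IsPart E A) : IsPart E' (e '' A) := by
  constructor
  · exact h.1.image e
  · obtain ⟨w, hw⟩ := h.2
    refine ⟨e w, fun hmem => hw ?_⟩
    rcases hmem with hmem | hmem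
    · obtain ⟨v, hv, hev⟩ := hmem
      exact Or.inl (e.injective hev ▸ hv)
    · rw [image_Nout e hE] at hmem
      obtain ⟨v, hv, hev⟩ := hmem
      exact Or.inr (e.injective hev ▸ hv)

lemma IsAtomD_image (e : V ≃ W) (hE : ∀ x y : V, E' (e x) (e y) ↔ E x y) {A : Set V}
    (h : IsAtomD E A) : IsAtomD E' (e '' A) := by
  refine ⟨IsPart_image e hE h.1, ?_, ?_⟩
  · rw [image_Nout e hE, Set.ncard_image_of_injective _ e.injective,
      kappa_eq_of_equiv e hE, h.2.1]
  · intro B hB hBκ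
    have hB' : IsPart E (e.symm '' B) := IsPart_image e.symm (hE_symm e hE) hB
    have hBκ' : (Nout E (e.symm '' B)).ncard = kappa E := by
      rw [image_Nout e.symm (hE_symm e hE), Set.ncard_image_of_injective _ e.symm.injective,
        ← kappa_eq_of_equiv e hE]
      exact hBκ
    have := h.2.2 (e.symm '' B) hB' hBκ'
    rw [Set.ncard_image_of_injective _ e.injective]
    rwa [Set.ncard_image_of_injective _ e.symm.injective] at this

end Transport

/-! ### group-theoretic setup -/

section GroupBasics

variable {G : Type*} [Group G] [Finite G] (H : Subgroup G)

lemma self_mem_dcoset (s : G) : s ∈ dcoset H s :=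
  ⟨1, one_mem _, 1, one_mem _, by group⟩

lemma dcoset_eq_of_mem {s t : G} (h : t ∈ dcoset H s) : dcoset H t = dcoset H s := by
  obtain ⟨h₁, hh₁, h₂, hh₂, rfl⟩ := h
  ext g
  constructor
  · rintro ⟨a, ha, b, hb, rfl⟩
    exact ⟨a * h₁, mul_mem ha hh₁, h₂ * b, mul_mem hh₂ hb, by group⟩
  · rintro ⟨a, ha, b, hb, rfl⟩
    refine ⟨a * h₁⁻¹, mul_mem ha (inv_mem hh₁), h₂⁻¹ * b, mul_mem (inv_mem hh₂) hb, by group⟩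

lemma dcoset_disjoint_of_ne {s t : G} (h : dcoset H s ≠ dcoset H t) :
    Disjoint (dcoset H s) (dcoset H t) := by
  rw [Set.disjoint_left]
  intro x hxs hxt
  exact h ((dcoset_eq_of_mem H hxs).symm.trans (dcoset_eq_of_mem H hxt))

lemma dcoset_right_mul {s g : G} (hg : g ∈ dcoset H s) {h : G} (hh : h ∈ H) :
    g * h ∈ dcoset H s := by
  obtain ⟨a, ha, b, hb, rfl⟩ := hg
  exact ⟨a, ha, b * h, mul_mem hb hh, by group⟩

lemma dcoset_left_mul {s g : G} (hg : g ∈ dcoset H s) {h : G} (hh : h ∈ H) :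
    h * g ∈ dcoset H s := by
  obtain ⟨a, ha, b, hb, rfl⟩ := hg
  exact ⟨h * a, mul_mem hh ha, b, hb, by group⟩

lemma cayleyRel_mk {S : Set G} {a b : G} :
    cayleyRel H S (a : G ⧸ H) (b : G ⧸ H) ↔ ∃ s ∈ S, a⁻¹ * b ∈ dcoset H s := by
  constructor
  · rintro ⟨s, hs, g₁, g₂, h1, h2, hmem⟩
    refine ⟨s, hs, ?_⟩
    have hu : g₁⁻¹ * a ∈ H := (QuotientGroup.eq).mp h1
    have hw : g₂⁻¹ * b ∈ H := (QuotientGroup.eq).mp h2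
    have : a⁻¹ * b = (g₁⁻¹ * a)⁻¹ * (g₁⁻¹ * g₂) * (g₂⁻¹ * b) := by group
    rw [this]
    exact dcoset_right_mul H (dcoset_left_mul H hmem (inv_mem hu)) hw
  · rintro ⟨s, hs, hmem⟩
    exact ⟨s, hs, a, b, rfl, rfl, hmem⟩

lemma smul_mk' (g a : G) : g • ((a : G) : G ⧸ H) = ((g * a : G) : G ⧸ H) := rfl

lemma cayleyRel_smul {S : Set G} (g : G) (x y : G ⧸ H) :
    cayleyRel H S (g • x) (g • y) ↔ cayleyRel H S x y := by
  obtain ⟨a, rfl⟩ := QuotientGroup.mk_surjective x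
  obtain ⟨b, rfl⟩ := QuotientGroup.mk_surjective y
  rw [smul_mk', smul_mk', cayleyRel_mk, cayleyRel_mk]
  have : (g * a)⁻¹ * (g * b) = a⁻¹ * b := by group
  rw [this]

lemma reach_smul {S : Set G} {x y : G ⧸ H} (g : G)
    (h : ReflTransGen (cayleyRel H S) x y) :
    ReflTransGen (cayleyRel H S) (g • x) (g • y) := by
  induction h with
  | refl => exact .refl
  | tail _ step ih => exact ih.tail ((cayleyRel_smul H g _ _).mpr step)

lemma sc_of_closure {S : Set G}
    (hgen : Subgroup.closure ((H : Set G) ∪ S) = ⊤) : SC (cayleyRel H S) := by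
  set R : Set G :=
    {g | ReflTransGen (cayleyRel H S) ((1 : G) : G ⧸ H) ((g : G) : G ⧸ H)} with hRdef
  have hone : (1 : G) ∈ R := ReflTransGen.refl
  have hmul : ∀ a ∈ R, ∀ b ∈ R, a * b ∈ R := by
    intro a ha b hb
    have h2 := reach_smul (H := H) a hb
    rw [smul_mk', smul_mk', mul_one] at h2
    exact ReflTransGen.trans ha h2
  have hH : ∀ h ∈ H, (h : G) ∈ R := by
    intro h hh
    have heq : ((h : G) : G ⧸ H) = ((1 : G) : G ⧸ H) := by
      rw [QuotientGroup.eq]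
      simpa using inv_mem hh
    show ReflTransGen (cayleyRel H S) ((1 : G) : G ⧸ H) ((h : G) : G ⧸ H)
    rw [heq]
  have hS : ∀ s ∈ S, s ∈ R := by
    intro s hs
    refine ReflTransGen.single ((cayleyRel_mk H).mpr ⟨s, hs, ?_⟩)
    simpa using self_mem_dcoset H s
  have hinv : ∀ a ∈ R, a⁻¹ ∈ R := by
    intro a ha
    have hpow : ∀ n : ℕ, a ^ n ∈ R := by
      intro n
      induction n with
      | zero => simpa using hone
      | succ n ih => rw [pow_succ]; exact hmul _ ih _ ha
    have hn : 0 < Nat.card G := Nat.card_pos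
    have hcard : a ^ (Nat.card G) = 1 := pow_card_eq_one'
    have hainv : a⁻¹ = a ^ (Nat.card G - 1) := by
      refine inv_eq_of_mul_eq_one_right ?_
      rw [← pow_succ']
      have hone' : Nat.card G - 1 + 1 = Nat.card G := by omega
      rw [hone']
      exact hcard
    rw [hainv]
    exact hpow _
  let Rsub : Subgroup G :=
    { carrier := R
      one_mem' := hone
      mul_mem' := fun ha hb => hmul _ ha _ hb
      inv_mem' := fun ha => hinv _ ha }
  have htop : ∀ g : G, g ∈ R := by
    have hle : Subgroup.closure ((H : Set G) ∪ S) ≤ Rsub := by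
      rw [Subgroup.closure_le]
      rintro x (hx | hx)
      · exact hH x hx
      · exact hS x hx
    intro g
    exact hle (hgen ▸ Subgroup.mem_top g)
  intro x y
  obtain ⟨a, rfl⟩ := QuotientGroup.mk_surjective x
  obtain ⟨b, rfl⟩ := QuotientGroup.mk_surjective y
  have h2 := reach_smul (H := H) a (htop (a⁻¹ * b))
  rw [smul_mk', smul_mk', mul_one, mul_inv_cancel_left] at h2
  exact h2

lemma reach_closure {S : Set G} {x y : G ⧸ H}
    (h : ReflTransGen (cayleyRel H S) x y) :
    ∀ a b : G, (a : G ⧸ H) = x → (b : G ⧸ H) = y →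
      a ∈ Subgroup.closure ((H : Set G) ∪ S) →
      b ∈ Subgroup.closure ((H : Set G) ∪ S) := by
  have hHle : (H : Set G) ⊆ (Subgroup.closure ((H : Set G) ∪ S) : Set G) :=
    le_trans Set.subset_union_left Subgroup.subset_closure
  have hSle : S ⊆ (Subgroup.closure ((H : Set G) ∪ S) : Set G) :=
    le_trans Set.subset_union_right Subgroup.subset_closure
  induction h with
  | refl =>
    intro a b ha hb hacl
    have hab : a⁻¹ * b ∈ H := (QuotientGroup.eq).mp (ha.trans hb.symm)
    have : b = a * (a⁻¹ * b) := by group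
    rw [this]
    exact mul_mem hacl (hHle hab)
  | @tail c d hxc step ih =>
    intro a b ha hb hacl
    have hcc := ih a (Quotient.out c) ha (by simp [QuotientGroup.out_eq']) hacl
    have hedge : cayleyRel H S ((Quotient.out c : G) : G ⧸ H) ((b : G) : G ⧸ H) := by
      have h1 : ((Quotient.out c : G) : G ⧸ H) = c := QuotientGroup.out_eq' c
      rw [h1, hb]
      exact step
    obtain ⟨s, hs, hmem⟩ := (cayleyRel_mk H).mp hedge
    obtain ⟨h₁, hh₁, h₂, hh₂, heq⟩ := hmem
    have : b = (Quotient.out c) * (h₁ * s * h₂) := by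
      rw [← heq]; group
    rw [this]
    exact mul_mem hcc (mul_mem (mul_mem (hHle hh₁) (hSle hs)) (hHle hh₂))

lemma closure_eq_top_of_sc {S : Set G} (h : SC (cayleyRel H S)) :
    Subgroup.closure ((H : Set G) ∪ S) = ⊤ := by
  rw [Subgroup.eq_top_iff']
  intro g
  exact reach_closure H (h ((1 : G) : G ⧸ H) ((g : G) : G ⧸ H)) 1 g rfl rfl (one_mem _)

/-! ### counting: cosets in right-`H`-invariant sets -/

lemma ncard_image_mk_mul_card (X : Set G) (hX : ∀ x ∈ X, ∀ h ∈ H, x * h ∈ X) :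
    ((QuotientGroup.mk '' X : Set (G ⧸ H))).ncard * Nat.card H = X.ncard := by
  classical
  have hout : ∀ q : G ⧸ H, ((Quotient.out q : G) : G ⧸ H) = q := fun q =>
    QuotientGroup.out_eq' q
  have hmemX : ∀ y : G ⧸ H, y ∈ (QuotientGroup.mk '' X : Set (G ⧸ H)) →
      ∀ h ∈ H, (Quotient.out y) * h ∈ X := by
    intro y hy h hh
    obtain ⟨x₀, hx₀, hmk⟩ := hy
    have hmem : x₀⁻¹ * Quotient.out y ∈ H :=
      (QuotientGroup.eq).mp (hmk.trans (hout y).symm)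
    have heq : Quotient.out y * h = x₀ * ((x₀⁻¹ * Quotient.out y) * h) := by group
    rw [heq]
    exact hX x₀ hx₀ _ (mul_mem hmem hh)
  rw [← Nat.card_coe_set_eq, ← Nat.card_coe_set_eq, ← Nat.card_prod]
  refine Nat.card_congr ?_
  refine ⟨fun p => ⟨Quotient.out (p.1 : G ⧸ H) * (p.2 : G), hmemX _ p.1.2 _ p.2.2⟩,
    fun x => (⟨QuotientGroup.mk (x : G), (x : G), x.2, rfl⟩,
              ⟨(Quotient.out ((QuotientGroup.mk (x : G)) : G ⧸ H))⁻¹ * (x : G),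
                (QuotientGroup.eq).mp (hout _)⟩), ?_, ?_⟩
  · rintro ⟨⟨y, hy⟩, ⟨h, hh⟩⟩
    have hmk : QuotientGroup.mk (Quotient.out y * h) = y := by
      rw [QuotientGroup.mk_mul_of_mem _ hh, hout]
    refine Prod.ext (Subtype.ext ?_) (Subtype.ext ?_)
    · exact hmk
    · show (Quotient.out ((QuotientGroup.mk (Quotient.out y * h)) : G ⧸ H))⁻¹ *
          (Quotient.out y * h) = h
      rw [hmk]
      group
  · rintro ⟨x, hx⟩
    refine Subtype.ext ?_
    show Quotient.out ((QuotientGroup.mk x : G ⧸ H)) *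
        ((Quotient.out ((QuotientGroup.mk x : G ⧸ H)))⁻¹ * x) = x
    group

lemma le_ncard_image_mk {X : Set G} (hX : ∀ x ∈ X, ∀ h ∈ H, x * h ∈ X) {n : ℕ}
    (h : n * Nat.card H ≤ X.ncard) :
    n ≤ ((QuotientGroup.mk '' X : Set (G ⧸ H))).ncard := by
  have hcard := ncard_image_mk_mul_card H X hX
  have hpos : 0 < Nat.card H := Nat.card_pos
  exact Nat.le_of_mul_le_mul_right (by omega) hpos

lemma ncard_ge_of_rightCoset {K : Subgroup G} {X : Set G} {r : G}
    (h : ∀ k ∈ K, k * r ∈ X) : Nat.card K ≤ X.ncard := by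
  rw [← Nat.card_coe_set_eq]
  refine Nat.card_le_card_of_injective
    (fun k : K => (⟨(k : G) * r, h k k.2⟩ : X)) ?_
  intro a b hab
  have : (a : G) * r = (b : G) * r := congrArg Subtype.val hab
  exact Subtype.ext (mul_right_cancel this)

lemma card_subgroupOf (G' : Subgroup G) (hle : H ≤ G') :
    Nat.card (H.subgroupOf G') = Nat.card H :=
  Nat.card_congr (Subgroup.subgroupOfEquivOfLe hle).toEquiv

lemma q_mul_card (G' : Subgroup G) (hle : H ≤ G') :
    Nat.card (G' ⧸ H.subgroupOf G') * Nat.card H = Nat.card G' := by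
  rw [← card_subgroupOf H G' hle]
  exact (Subgroup.card_eq_card_quotient_mul_card_subgroup (H.subgroupOf G')).symm

end GroupBasics

end CCD


open Classical Relation
set_option linter.unusedSectionVars false

namespace CCD

variable {V : Type*} [Finite V]

lemma exists_crossing {r : V → V → Prop} {P : Set V} {a b : V}
    (h : ReflTransGen r a b) (ha : a ∈ P) (hb : b ∉ P) :
    ∃ x ∈ P, ∃ y, y ∉ P ∧ r x y := by
  induction h with
  | refl => exact absurd ha hb
  | @tail c d hac step ih =>
    by_cases hc : c ∈ P
    · exact ⟨c, hc, d, hb, step⟩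
    · exact ih hc

lemma ncard_sum_le_of_disjoint {ι : Type*} (s : Finset ι) (f : ι → Set V) (Y : Set V)
    (hsub : ∀ i ∈ s, f i ⊆ Y)
    (hdisj : ∀ i ∈ s, ∀ j ∈ s, i ≠ j → Disjoint (f i) (f j)) :
    ∑ i ∈ s, (f i).ncard ≤ Y.ncard := by
  classical
  revert hsub hdisj
  induction s using Finset.induction_on generalizing Y with
  | empty => intro _ _; simp
  | @insert a s ha ih =>
    intro hsub hdisj
    rw [Finset.sum_insert ha]
    have hsub' : ∀ i ∈ s, f i ⊆ Y \ f a := by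
      intro i hi x hx
      refine ⟨hsub i (Finset.mem_insert_of_mem hi) hx, ?_⟩
      intro hxa
      have hne : a ≠ i := by rintro rfl; exact ha hi
      exact (Set.disjoint_left.mp (hdisj a (Finset.mem_insert_self a s) i
        (Finset.mem_insert_of_mem hi) hne)) hxa hx
    have h2 := ih (Y \ f a) hsub'
      (fun i hi j hj hij =>
        hdisj i (Finset.mem_insert_of_mem hi) j (Finset.mem_insert_of_mem hj) hij)
    have h3 : (f a).ncard ≤ Y.ncard :=
      Set.ncard_le_ncard (hsub a (Finset.mem_insert_self a s)) Y.toFinite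
    have h4 : (Y \ f a).ncard = Y.ncard - (f a).ncard := by
      rw [Set.ncard_diff (hsub a (Finset.mem_insert_self a s))]
    omega

lemma ncard_eq_sum_fibers {B : Type*} [Fintype B] (X : Set V) (f : V → B) :
    X.ncard = ∑ b : B, (X ∩ f ⁻¹' {b}).ncard := by
  classical
  have hX : X.Finite := X.toFinite
  rw [Set.ncard_eq_toFinset_card X hX]
  rw [Finset.card_eq_sum_card_fiberwise (f := f) (t := Finset.univ)
    (fun x _ => Finset.mem_univ _)]
  refine Finset.sum_congr rfl (fun b _ => ?_)
  have hfin : (X ∩ f ⁻¹' {b}).Finite := Set.toFinite _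
  rw [Set.ncard_eq_toFinset_card _ hfin]
  congr 1
  ext x
  simp [Set.Finite.mem_toFinset]

end CCD


open Classical Relation
set_option linter.unusedSectionVars false

namespace CCD

variable {G : Type*} [Group G] [Finite G]

theorem exists_atom_subgroup (H : Subgroup G) (S : Set G)
    (hsep : ∃ T : Set (G ⧸ H), ¬ SCOn (cayleyRel H S) Tᶜ)
    (hdir : ∀ A B : Set (G ⧸ H), IsAtomD (cayleyRel H S) A →
      IsAtomD (flip (cayleyRel H S)) B → A.ncard ≤ B.ncard) :
    ∃ K : Subgroup G, H ≤ K ∧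
      IsAtomD (cayleyRel H S) (QuotientGroup.mk '' (K : Set G)) := by
  set E := cayleyRel H S with hE
  obtain ⟨A₀, hA₀⟩ := exists_atom hsep
  obtain ⟨v, hv⟩ := hA₀.1.1
  obtain ⟨g₀, rfl⟩ := QuotientGroup.mk_surjective v
  have hEt : ∀ g : G, ∀ x y : G ⧸ H,
      E (MulAction.toPerm g x) (MulAction.toPerm g y) ↔ E x y := by
    intro g x y
    simpa [MulAction.toPerm_apply] using cayleyRel_smul H (S := S) g x y
  set A : Set (G ⧸ H) := (MulAction.toPerm g₀⁻¹) '' A₀ with hAdef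
  have hA : IsAtomD E A := IsAtomD_image _ (hEt g₀⁻¹) hA₀
  have h1A : ((1 : G) : G ⧸ H) ∈ A := by
    refine ⟨QuotientGroup.mk g₀, hv, ?_⟩
    simp [MulAction.toPerm_apply, smul_mk']
  have hsmulA : ∀ g : G, ((g : G) : G ⧸ H) ∈ A → (MulAction.toPerm g) '' A = A := by
    intro g hg
    have hAg : IsAtomD E ((MulAction.toPerm g) '' A) := IsAtomD_image _ (hEt g) hA
    have hmeets : ((MulAction.toPerm g '' A) ∩ A).Nonempty := by
      refine ⟨((g : G) : G ⧸ H), ⟨((1 : G) : G ⧸ H), h1A, ?_⟩, hg⟩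
      simp [MulAction.toPerm_apply, smul_mk']
    have hsub1 : (MulAction.toPerm g '' A) ⊆ A :=
      atom_subset_fragment' (fun B hB => hdir _ B hAg hB) hAg hA.1 hA.2.1 hmeets
    have hsub2 : A ⊆ (MulAction.toPerm g '' A) :=
      atom_subset_fragment' (fun B hB => hdir _ B hA hB) hA hAg.1 hAg.2.1
        (by rwa [Set.inter_comm] at hmeets)
    exact Set.Subset.antisymm hsub1 hsub2
  set K : Subgroup G :=
    { carrier := {g : G | ((g : G) : G ⧸ H) ∈ A}
      one_mem' := h1A
      mul_mem' := by
        intro a b ha hb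
        have hmem : ((a * b : G) : G ⧸ H) ∈ (MulAction.toPerm a) '' A :=
          ⟨((b : G) : G ⧸ H), hb, by simp [MulAction.toPerm_apply, smul_mk']⟩
        rw [hsmulA a ha] at hmem
        exact hmem
      inv_mem' := by
        intro a ha
        have h2 : (MulAction.toPerm a⁻¹) '' A = A := by
          calc (MulAction.toPerm a⁻¹) '' A
              = (MulAction.toPerm a⁻¹) '' ((MulAction.toPerm a) '' A) := by
                rw [hsmulA a ha]
            _ = A := by
                rw [← Set.image_comp]
                have hcomp : (⇑(MulAction.toPerm (β := G ⧸ H) a⁻¹) ∘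
                    ⇑(MulAction.toPerm (β := G ⧸ H) a)) = id := by
                  funext x
                  simp [MulAction.toPerm_apply]
                rw [hcomp, Set.image_id]
        have hmem : ((a⁻¹ : G) : G ⧸ H) ∈ (MulAction.toPerm a⁻¹) '' A :=
          ⟨((1 : G) : G ⧸ H), h1A, by simp [MulAction.toPerm_apply, smul_mk']⟩
        rw [h2] at hmem
        exact hmem } with hK
  have hHK : H ≤ K := by
    intro h hh
    show ((h : G) : G ⧸ H) ∈ A
    have heq : ((h : G) : G ⧸ H) = ((1 : G) : G ⧸ H) := by
      rw [QuotientGroup.eq]; simpa using inv_mem hh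
    rw [heq]; exact h1A
  have hAK : A = QuotientGroup.mk '' (K : Set G) := by
    ext x
    constructor
    · intro hx
      obtain ⟨g, rfl⟩ := QuotientGroup.mk_surjective x
      exact ⟨g, hx, rfl⟩
    · rintro ⟨g, hg, rfl⟩
      exact hg
  exact ⟨K, hHK, hAK ▸ hA⟩

end CCD


open Classical Relation
set_option linter.unusedSectionVars false
set_option maxHeartbeats 1000000

namespace CCD

variable {G : Type*} [Group G] [Finite G]

/-- `K * G'` as a set. -/
def KGset (K G' : Subgroup G) : Set G := {g | ∃ k ∈ K, ∃ g' ∈ G', g = k * g'}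

/-- `K * r * H` as a set. -/
def KrH (K : Subgroup G) (r : G) (H : Subgroup G) : Set G :=
  {g | ∃ k ∈ K, ∃ h ∈ H, g = k * r * h}

lemma mk_mem_image_iff (H : Subgroup G) {X : Set G}
    (hX : ∀ x ∈ X, ∀ h ∈ H, x * h ∈ X) {g : G} :
    (QuotientGroup.mk g ∈ (QuotientGroup.mk '' X : Set (G ⧸ H))) ↔ g ∈ X := by
  constructor
  · rintro ⟨x, hx, hmk⟩
    have hmem : x⁻¹ * g ∈ H := (QuotientGroup.eq).mp hmk
    have : g = x * (x⁻¹ * g) := by group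
    rw [this]
    exact hX x hx _ hmem
  · intro hg
    exact ⟨g, hg, rfl⟩

theorem main_dir (H : Subgroup G) (S R₁ R₂ : Finset G)
    (hdc : ∀ s ∈ S, ∀ t ∈ S, s ≠ t → dcoset H s ≠ dcoset H t)
    (hconn : SC (cayleyRel H (S : Set G)))
    (hunion : R₁ ∪ R₂ = S)
    (G' : Subgroup G) (hG' : G' = Subgroup.closure ((H : Set G) ∪ (R₁ : Set G)))
    (hR₂ : ∀ r ∈ R₂, r ∉ G')
    (hsame : ∀ r ∈ R₂, ∀ t ∈ R₂, dcoset G' r = dcoset G' t →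
      Subgroup.closure ((H : Set G) ∪ {r}) = Subgroup.closure ((H : Set G) ∪ {t}))
    (hsep : ∃ T : Set (G ⧸ H), ¬ SCOn (cayleyRel H (S : Set G)) Tᶜ)
    (hdir : ∀ A B : Set (G ⧸ H), IsAtomD (cayleyRel H (S : Set G)) A →
      IsAtomD (flip (cayleyRel H (S : Set G))) B → A.ncard ≤ B.ncard) :
    min (Nat.card (G' ⧸ H.subgroupOf G'))
      (kappa (cayleyRel (H.subgroupOf G') ((Subtype.val ⁻¹' (R₁ : Set G)) : Set G'))
        + ∑ s ∈ R₂, dval H s) ≤ kappa (cayleyRel H (S : Set G)) := by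
  by_contra hcon
  push_neg at hcon
  obtain ⟨hq, hkd⟩ := lt_min_iff.mp hcon
  -- preliminaries
  have hHG' : H ≤ G' := by
    rw [hG']; exact fun x hx => Subgroup.subset_closure (Or.inl hx)
  have hR₁G' : ∀ r ∈ R₁, r ∈ G' := by
    intro r hr; rw [hG']; exact Subgroup.subset_closure (Or.inr hr)
  have hR₂S : ∀ t ∈ R₂, t ∈ (S : Set G) := by
    intro t ht
    rw [← hunion]
    exact Finset.mem_coe.mpr (Finset.mem_union_right _ ht)
  have hgenS := closure_eq_top_of_sc H hconn
  obtain ⟨K, hHK, hA⟩ := exists_atom_subgroup H (S : Set G) hsep hdir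
  set E : (G ⧸ H) → (G ⧸ H) → Prop := cayleyRel H (S : Set G) with hEdef
  set A : Set (G ⧸ H) := QuotientGroup.mk '' (K : Set G) with hAdef
  set q : ℕ := Nat.card (G' ⧸ H.subgroupOf G') with hqdef
  set κ' : ℕ := kappa (cayleyRel (H.subgroupOf G')
    ((Subtype.val ⁻¹' (R₁ : Set G)) : Set G')) with hκ'def
  have hEt : ∀ g : G, ∀ x y : G ⧸ H,
      E (MulAction.toPerm g x) (MulAction.toPerm g y) ↔ E x y := by
    intro g x y
    simpa [MulAction.toPerm_apply] using cayleyRel_smul H (S := (S : Set G)) g x y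
  have hcardH : 0 < Nat.card H := Nat.card_pos
  have hqH : q * Nat.card H = Nat.card G' := q_mul_card H G' hHG'
  have hrinvK : ∀ x ∈ (K : Set G), ∀ h ∈ H, x * h ∈ (K : Set G) :=
    fun x hx h hh => mul_mem hx (hHK hh)
  have hrinvG' : ∀ x ∈ (G' : Set G), ∀ h ∈ H, x * h ∈ (G' : Set G) :=
    fun x hx h hh => mul_mem hx (hHG' hh)
  have hmemA : ∀ g : G, QuotientGroup.mk g ∈ A ↔ g ∈ K :=
    fun g => mk_mem_image_iff H hrinvK
  have hcardG' : (G' : Set G).ncard = Nat.card G' := (Nat.card_coe_set_eq _).symm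
  have hcardK : (K : Set G).ncard = Nat.card K := (Nat.card_coe_set_eq _).symm
  have hAcard : A.ncard * Nat.card H = Nat.card K := by
    rw [hAdef, ncard_image_mk_mul_card H _ hrinvK, hcardK]
  have hκtop := hA.2.1   -- (Nout E A).ncard = kappa E
  -- `K r H`-neighbours
  have hKrH_rinv : ∀ r : G, ∀ x ∈ KrH K r H, ∀ h ∈ H, x * h ∈ KrH K r H := by
    rintro r x ⟨k, hk, h0, hh0, rfl⟩ h hh
    exact ⟨k, hk, h0 * h, mul_mem hh0 hh, by group⟩
  have hKrH_nout : ∀ r, r ∈ (S : Set G) → r ∉ K →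
      (QuotientGroup.mk '' KrH K r H : Set (G ⧸ H)) ⊆ Nout E A := by
    rintro r hrS hrK x ⟨g, ⟨k, hk, h0, hh0, rfl⟩, rfl⟩
    constructor
    · intro hmem
      rw [hmemA] at hmem
      have : r = k⁻¹ * (k * r * h0) * h0⁻¹ := by group
      exact hrK (this ▸ mul_mem (mul_mem (inv_mem hk) hmem) (inv_mem (hHK hh0)))
    · refine ⟨QuotientGroup.mk k, (hmemA k).mpr hk, ?_⟩
      refine (cayleyRel_mk H).mpr ⟨r, hrS, 1, one_mem _, h0, hh0, by group⟩
  -- CASE α : G' ≤ K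
  by_cases hG'K : G' ≤ K
  · have hrex : ∃ r ∈ R₂, r ∉ K := by
      by_contra hc
      push_neg at hc
      have hKtop : ∀ g : G, g ∈ K := by
        have hle : Subgroup.closure ((H : Set G) ∪ (S : Set G)) ≤ K := by
          rw [Subgroup.closure_le]
          rintro x (hx | hx)
          · exact hHK hx
          · rw [← hunion] at hx
            rcases Finset.mem_union.mp (Finset.mem_coe.mp hx) with h | h
            · exact hG'K (hR₁G' x h)
            · exact hc x h
        intro g; exact hle (hgenS ▸ Subgroup.mem_top g)
      have hAuniv : A = Set.univ := by
        ext x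
        simp only [Set.mem_univ, iff_true]
        obtain ⟨g, rfl⟩ := QuotientGroup.mk_surjective x
        exact (hmemA g).mpr (hKtop g)
      obtain ⟨w, hw⟩ := hA.1.2
      exact hw (Or.inl (hAuniv ▸ Set.mem_univ w))
    obtain ⟨r, hrR₂, hrK⟩ := hrex
    have hsub := hKrH_nout r (hR₂S r hrR₂) hrK
    have hq2 : q ≤ (QuotientGroup.mk '' KrH K r H : Set (G ⧸ H)).ncard := by
      refine le_ncard_image_mk H (hKrH_rinv r) ?_
      rw [hqH]
      exact ncard_ge_of_rightCoset (K := G') (X := KrH K r H) (r := r)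
        (fun g' hg' => ⟨g', hG'K hg', 1, one_mem _, by group⟩)
    have hq3 : q ≤ kappa E := by
      rw [← hκtop]
      exact hq2.trans (Set.ncard_le_ncard hsub (Set.toFinite _))
    omega
  · -- ¬ G' ≤ K
    set B₀ : Set (G ⧸ H) := QuotientGroup.mk '' (G' : Set G) with hB₀def
    have hmemB₀ : ∀ g : G, QuotientGroup.mk g ∈ B₀ ↔ g ∈ G' :=
      fun g => mk_mem_image_iff H hrinvG'
    have hB₀card : B₀.ncard = q := by
      have h1 : B₀.ncard * Nat.card H = Nat.card G' := by
        rw [hB₀def, ncard_image_mk_mul_card H _ hrinvG', hcardG']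
      exact Nat.eq_of_mul_eq_mul_right hcardH (h1.trans hqH.symm)
    -- translation by elements of K preserves A and Nout A
    have hsmulA : ∀ k ∈ K, (MulAction.toPerm k) '' A = A := by
      intro k hk
      ext x
      constructor
      · rintro ⟨y, hy, rfl⟩
        obtain ⟨g, hg, rfl⟩ := hy
        have heq : MulAction.toPerm k ((QuotientGroup.mk g : G ⧸ H))
            = (QuotientGroup.mk (k * g) : G ⧸ H) := by
          simp [MulAction.toPerm_apply, smul_mk']
        rw [heq]
        exact (hmemA _).mpr (mul_mem hk hg)
      · intro hx
        obtain ⟨g, rfl⟩ := QuotientGroup.mk_surjective x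
        have hg : g ∈ K := (hmemA g).mp hx
        refine ⟨QuotientGroup.mk (k⁻¹ * g), (hmemA _).mpr (mul_mem (inv_mem hk) hg), ?_⟩
        simp [MulAction.toPerm_apply, smul_mk', mul_inv_cancel_left]
    have hNoutinv : ∀ k ∈ K, (MulAction.toPerm k) '' (Nout E A) = Nout E A := by
      intro k hk
      conv_rhs => rw [← hsmulA k hk]
      rw [image_Nout _ (hEt k)]
    have hNoutmem : ∀ k ∈ K, ∀ y ∈ Nout E A, (k • y) ∈ Nout E A := by
      intro k hk y hy
      have : (k • y) ∈ (MulAction.toPerm k) '' (Nout E A) :=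
        ⟨y, hy, by simp [MulAction.toPerm_apply]⟩
      rwa [hNoutinv k hk] at this
    -- A ∩ B₀ and its size
    have hrinvK₀ : ∀ x ∈ ((K ⊓ G' : Subgroup G) : Set G), ∀ h ∈ H,
        x * h ∈ ((K ⊓ G' : Subgroup G) : Set G) :=
      fun x hx h hh => mul_mem hx ⟨hHK hh, hHG' hh⟩
    have hAB₀ : A ∩ B₀ = QuotientGroup.mk '' (((K ⊓ G' : Subgroup G)) : Set G) := by
      ext x
      constructor
      · rintro ⟨hxA, hxB⟩
        obtain ⟨g, rfl⟩ := QuotientGroup.mk_surjective x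
        exact ⟨g, ⟨(hmemA g).mp hxA, (hmemB₀ g).mp hxB⟩, rfl⟩
      · rintro ⟨g, ⟨hgK, hgG'⟩, rfl⟩
        exact ⟨(hmemA g).mpr hgK, (hmemB₀ g).mpr hgG'⟩
    set p : ℕ := (A ∩ B₀).ncard with hpdef
    have hpcard : p * Nat.card H = Nat.card (K ⊓ G' : Subgroup G) := by
      rw [hpdef, hAB₀, ncard_image_mk_mul_card H _ hrinvK₀]
      exact (Nat.card_coe_set_eq _).symm
    by_cases hsat : B₀ ⊆ A ∪ Nout E A
    · -- saturated case
      by_cases hKG'sub : (K : Set G) ⊆ (G' : Set G)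
      · -- single block
        have hR₂ne : R₂.Nonempty := by
          rw [Finset.nonempty_iff_ne_empty]
          intro hc
          have hStop : Subgroup.closure ((H : Set G) ∪ (R₁ : Set G)) = ⊤ := by
            rw [← hgenS, ← hunion, hc]
            simp
          have hG'top : G' = ⊤ := by rw [hG', hStop]
          have hB₀univ : B₀ = Set.univ := by
            ext x
            simp only [Set.mem_univ, iff_true]
            obtain ⟨g, rfl⟩ := QuotientGroup.mk_surjective x
            exact (hmemB₀ g).mpr (by rw [hG'top]; trivial)
          obtain ⟨w, hw⟩ := hA.1.2
          exact hw (hsat (hB₀univ ▸ Set.mem_univ w))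
        obtain ⟨r, hrR₂⟩ := hR₂ne
        have hrK : r ∉ K := fun hcK => hR₂ r hrR₂ (hKG'sub hcK)
        set X₁ : Set (G ⧸ H) := B₀ \ A with hX₁def
        set X₂ : Set (G ⧸ H) := QuotientGroup.mk '' KrH K r H with hX₂def
        have hX₁sub : X₁ ⊆ Nout E A := by
          rintro x ⟨hxB, hxA⟩
          exact (hsat hxB).resolve_left hxA
        have hX₂sub : X₂ ⊆ Nout E A := hKrH_nout r (hR₂S r hrR₂) hrK
        have hX₂B₀ : Disjoint X₁ X₂ := by
          rw [Set.disjoint_left]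
          rintro x ⟨hxB, _⟩ ⟨g, ⟨k, hk, h0, hh0, rfl⟩, rfl⟩
          have hgG' : k * r * h0 ∈ G' := (hmemB₀ _).mp hxB
          have : r = k⁻¹ * (k * r * h0) * h0⁻¹ := by group
          exact hR₂ r hrR₂
            (this ▸ mul_mem (mul_mem (inv_mem (hKG'sub hk)) hgG') (inv_mem (hHG' hh0)))
        have hAsubB₀ : A ⊆ B₀ := by
          rintro x ⟨g, hg, rfl⟩
          exact ⟨g, hKG'sub hg, rfl⟩
        have hX₁card : X₁.ncard = q - A.ncard := by
          rw [hX₁def, Set.ncard_diff hAsubB₀, hB₀card]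
        have hX₂card : A.ncard ≤ X₂.ncard := by
          refine le_ncard_image_mk H (hKrH_rinv r) ?_
          rw [hAcard, ← hcardK]
          exact ncard_ge_of_rightCoset (K := K) (X := KrH K r H) (r := r)
            (fun k hk => ⟨k, hk, 1, one_mem _, by group⟩)
        have hAq : A.ncard ≤ q := by
          rw [← hB₀card]
          exact Set.ncard_le_ncard hAsubB₀ (Set.toFinite _)
        have hunioncard : X₁.ncard + X₂.ncard ≤ kappa E := by
          rw [← hκtop, ← Set.ncard_union_eq hX₂B₀ (Set.toFinite _) (Set.toFinite _)]
          exact Set.ncard_le_ncard (Set.union_subset hX₁sub hX₂sub) (Set.toFinite _)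
        omega
      · -- at least two blocks
        obtain ⟨k₁, hk₁K, hk₁G'⟩ := Set.not_subset.mp hKG'sub
        set X₁ : Set (G ⧸ H) := B₀ \ A with hX₁def
        have hX₁sub : X₁ ⊆ Nout E A := by
          rintro x ⟨hxB, hxA⟩
          exact (hsat hxB).resolve_left hxA
        set X₂ : Set (G ⧸ H) := (MulAction.toPerm k₁) '' X₁ with hX₂def
        have hX₂sub : X₂ ⊆ Nout E A := by
          rintro x ⟨y, hy, rfl⟩
          have := hNoutmem k₁ hk₁K y (hX₁sub hy)
          simpa [MulAction.toPerm_apply] using this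
        have hdisj : Disjoint X₁ X₂ := by
          rw [Set.disjoint_left]
          rintro x ⟨hxB, _⟩ ⟨y, ⟨hyB, _⟩, rfl⟩
          obtain ⟨g', hg', hmk⟩ := hyB
          rw [← hmk] at hxB
          have heq2 : MulAction.toPerm k₁ ((QuotientGroup.mk g' : G ⧸ H))
              = (QuotientGroup.mk (k₁ * g') : G ⧸ H) := by
            simp [MulAction.toPerm_apply, smul_mk']
          rw [heq2] at hxB
          have hk₁g' : k₁ * g' ∈ G' := (hmemB₀ _).mp hxB
          exact hk₁G' (by
            have : k₁ = (k₁ * g') * g'⁻¹ := by group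
            rw [this]
            exact mul_mem hk₁g' (inv_mem hg'))
        have hX₁card : X₁.ncard = q - p := by
          have h1 : B₀ \ A = B₀ \ (A ∩ B₀) := by
            ext x; constructor
            · rintro ⟨h1, h2⟩; exact ⟨h1, fun hc => h2 hc.1⟩
            · rintro ⟨h1, h2⟩; exact ⟨h1, fun hc => h2 ⟨hc, h1⟩⟩
          rw [hX₁def, h1, Set.ncard_diff Set.inter_subset_right, hB₀card, hpdef]
        have hX₂card : X₂.ncard = q - p := by
          rw [hX₂def, Set.ncard_image_of_injective _ (MulAction.toPerm k₁).injective]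
          exact hX₁card
        -- 2 * p ≤ q
        have h2p : 2 * p ≤ q := by
          obtain ⟨g₂, hg₂G', hg₂K⟩ : ∃ g₂ ∈ G', g₂ ∉ K := by
            by_contra hc; push_neg at hc; exact hG'K hc
          have hdisj2 : Disjoint ((K ⊓ G' : Subgroup G) : Set G)
              ((fun x => g₂ * x) '' ((K ⊓ G' : Subgroup G) : Set G)) := by
            rw [Set.disjoint_left]
            rintro x hx ⟨y, hy, rfl⟩
            exact hg₂K (by
              have : g₂ = (g₂ * y) * y⁻¹ := by group
              rw [this]
              exact mul_mem hx.1 (inv_mem hy.1))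
          have hsub2 : ((K ⊓ G' : Subgroup G) : Set G)
              ∪ ((fun x => g₂ * x) '' ((K ⊓ G' : Subgroup G) : Set G)) ⊆ (G' : Set G) := by
            rintro x (hx | ⟨y, hy, rfl⟩)
            · exact hx.2
            · exact mul_mem hg₂G' hy.2
          have hcount := Set.ncard_le_ncard hsub2 (Set.toFinite _)
          rw [Set.ncard_union_eq hdisj2 (Set.toFinite _) (Set.toFinite _),
            Set.ncard_image_of_injective _ (mul_right_injective g₂), hcardG'] at hcount
          have hK₀ : ((K ⊓ G' : Subgroup G) : Set G).ncard
              = Nat.card (K ⊓ G' : Subgroup G) := (Nat.card_coe_set_eq _).symm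
          rw [hK₀] at hcount
          have hmul : (2 * p) * Nat.card H ≤ q * Nat.card H := by
            have h2 : (2 * p) * Nat.card H
                = Nat.card (K ⊓ G' : Subgroup G) + Nat.card (K ⊓ G' : Subgroup G) := by
              rw [← hpcard]; ring
            rw [h2, hqH]
            exact hcount
          exact Nat.le_of_mul_le_mul_right hmul hcardH
        have hunioncard : X₁.ncard + X₂.ncard ≤ kappa E := by
          rw [← hκtop, ← Set.ncard_union_eq hdisj (Set.toFinite _) (Set.toFinite _)]
          exact Set.ncard_le_ncard (Set.union_subset hX₁sub hX₂sub) (Set.toFinite _)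
        omega
    · -- NONSAT
      obtain ⟨v, hvB₀, hvβ⟩ := Set.not_subset.mp hsat
      set E' : (G' ⧸ H.subgroupOf G') → (G' ⧸ H.subgroupOf G') → Prop :=
        cayleyRel (H.subgroupOf G') ((Subtype.val ⁻¹' (R₁ : Set G)) : Set G') with hE'def
      set ψ : (G' ⧸ H.subgroupOf G') → G ⧸ H :=
        fun x' => QuotientGroup.mk ((Quotient.out x' : G') : G) with hψdef
      have hψmk : ∀ u : G', ψ (QuotientGroup.mk u) = QuotientGroup.mk (u : G) := by
        intro u
        have h1 : ((Quotient.out (QuotientGroup.mk u : G' ⧸ H.subgroupOf G') : G')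
            : G' ⧸ H.subgroupOf G') = QuotientGroup.mk u := QuotientGroup.out_eq' _
        have h2 := (QuotientGroup.eq).mp h1
        rw [Subgroup.mem_subgroupOf] at h2
        show QuotientGroup.mk _ = (QuotientGroup.mk (u : G) : G ⧸ H)
        rw [QuotientGroup.eq]
        simpa using h2
      have hψinj : Function.Injective ψ := by
        intro x' y' hxy
        obtain ⟨u, rfl⟩ := QuotientGroup.mk_surjective x'
        obtain ⟨w, rfl⟩ := QuotientGroup.mk_surjective y'
        rw [hψmk, hψmk, QuotientGroup.eq] at hxy
        rw [QuotientGroup.eq, Subgroup.mem_subgroupOf]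
        simpa using hxy
      have hψB₀ : ∀ x', ψ x' ∈ B₀ := fun x' =>
        ⟨((Quotient.out x' : G') : G), (Quotient.out x').2, rfl⟩
      have hfwd : ∀ x' y', E' x' y' → E (ψ x') (ψ y') := by
        intro x' y' h
        obtain ⟨u, rfl⟩ := QuotientGroup.mk_surjective x'
        obtain ⟨w, rfl⟩ := QuotientGroup.mk_surjective y'
        rw [hψmk, hψmk]
        obtain ⟨s', hs', hmem⟩ := (cayleyRel_mk (H.subgroupOf G')).mp h
        obtain ⟨h₁, hh₁, h₂, hh₂, heq⟩ := hmem
        refine (cayleyRel_mk H).mpr ⟨(s' : G), ?_, ?_⟩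
        · rw [← hunion]
          exact Finset.mem_coe.mpr (Finset.mem_union_left _ hs')
        · refine ⟨(h₁ : G), (Subgroup.mem_subgroupOf).mp hh₁,
            (h₂ : G), (Subgroup.mem_subgroupOf).mp hh₂, ?_⟩
          have hval := congrArg (Subtype.val) heq
          push_cast at hval
          exact hval
      have hgen' : Subgroup.closure (((H.subgroupOf G' : Subgroup G') : Set G')
          ∪ (Subtype.val ⁻¹' (R₁ : Set G))) = ⊤ := by
        have hle0 : Subgroup.closure ((H : Set G) ∪ (R₁ : Set G)) ≤ Subgroup.map G'.subtype
            (Subgroup.closure (((H.subgroupOf G' : Subgroup G') : Set G')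
              ∪ (Subtype.val ⁻¹' (R₁ : Set G)))) := by
          rw [Subgroup.closure_le]
          rintro x (hx | hx)
          · exact ⟨⟨x, hHG' hx⟩, Subgroup.subset_closure
              (Or.inl ((Subgroup.mem_subgroupOf).mpr hx)), rfl⟩
          · exact ⟨⟨x, hR₁G' x hx⟩, Subgroup.subset_closure (Or.inr hx), rfl⟩
        have hle := le_of_eq_of_le hG' hle0
        rw [Subgroup.eq_top_iff']
        intro u
        obtain ⟨w, hw, hwu⟩ := hle u.2
        have hwu' : w = u := Subtype.ext hwu
        rwa [hwu'] at hw
      have hSC' : SC E' := sc_of_closure (H.subgroupOf G') hgen'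
      set P' : Set (G' ⧸ H.subgroupOf G') := ψ ⁻¹' A with hP'def
      have h1P' : (QuotientGroup.mk (1 : G') : G' ⧸ H.subgroupOf G') ∈ P' := by
        show ψ _ ∈ A
        rw [hψmk]
        have hone : ((1 : G') : G) = (1 : G) := rfl
        rw [hone]
        exact (hmemA 1).mpr (one_mem K)
      obtain ⟨v', hv'⟩ : ∃ v', ψ v' = v := by
        obtain ⟨g', hg', rfl⟩ := hvB₀
        exact ⟨QuotientGroup.mk (⟨g', hg'⟩ : G'), by rw [hψmk]⟩
      have hv'P' : v' ∉ P' := by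
        intro hc
        have : ψ v' ∈ A := hc
        rw [hv'] at this
        exact hvβ (Or.inl this)
      have hP'part : IsPart E' P' := by
        refine ⟨⟨_, h1P'⟩, ⟨v', fun hmem => ?_⟩⟩
        rcases hmem with hmem | hmem
        · exact hv'P' hmem
        · obtain ⟨hnv', x', hx', hE'x⟩ := hmem
          have hedge := hfwd x' v' hE'x
          rw [hv'] at hedge
          exact hvβ (Or.inr ⟨fun hc => hvβ (Or.inl hc), ψ x', hx', hedge⟩)
      have hκ'P' : κ' ≤ (Nout E' P').ncard := kappa_le_part hP'part
      set N₀ : Set (G ⧸ H) := Nout E A ∩ B₀ with hN₀def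
      have hψN : ψ '' (Nout E' P') ⊆ N₀ := by
        rintro x ⟨y', ⟨hny', x', hx', hE'x⟩, rfl⟩
        exact ⟨⟨fun hc => hny' hc, ψ x', hx', hfwd x' y' hE'x⟩, hψB₀ y'⟩
      have hκ'n₀ : κ' ≤ N₀.ncard := by
        calc κ' ≤ (Nout E' P').ncard := hκ'P'
          _ = (ψ '' (Nout E' P')).ncard := (Set.ncard_image_of_injective _ hψinj).symm
          _ ≤ N₀.ncard := Set.ncard_le_ncard hψN (Set.toFinite _)
      have hN₀ne : N₀.Nonempty := by
        obtain ⟨x', hx', y', hny', hE'x⟩ := exists_crossing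
          (hSC' (QuotientGroup.mk (1 : G')) v') h1P' hv'P'
        exact ⟨ψ y', ⟨fun hc => hny' hc, ψ x', hx', hfwd x' y' hE'x⟩, hψB₀ y'⟩
      have hpn₀ : p ≤ N₀.ncard := by
        obtain ⟨y, hyN⟩ := hN₀ne
        obtain ⟨x₀, hx₀G', rfl⟩ := hyN.2
        have horb : (QuotientGroup.mk '' KrH (K ⊓ G') x₀ H : Set (G ⧸ H)) ⊆ N₀ := by
          rintro z ⟨g, ⟨k, hk, h0, hh0, rfl⟩, rfl⟩
          have hz : (QuotientGroup.mk (k * x₀ * h0) : G ⧸ H)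
              = k • (QuotientGroup.mk x₀ : G ⧸ H) := by
            rw [QuotientGroup.mk_mul_of_mem (k * x₀) hh0, smul_mk']
          rw [hz]
          constructor
          · exact hNoutmem k (Subgroup.mem_inf.mp hk).1 _ hyN.1
          · rw [smul_mk']
            exact (hmemB₀ _).mpr (mul_mem (Subgroup.mem_inf.mp hk).2 hx₀G')
        refine le_trans ?_ (Set.ncard_le_ncard horb (Set.toFinite _))
        refine le_ncard_image_mk H (fun x hx h hh => ?_) ?_
        · obtain ⟨k, hk, h0, hh0, rfl⟩ := hx
          exact ⟨k, hk, h0 * h, mul_mem hh0 hh, by group⟩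
        · rw [hpcard]
          exact ncard_ge_of_rightCoset (K := K ⊓ G') (X := KrH (K ⊓ G') x₀ H) (r := x₀)
            (fun k hk => ⟨k, hk, 1, one_mem _, by group⟩)
      -- block projection
      letI : Fintype (G ⧸ G') := Fintype.ofFinite _
      set π : G ⧸ H → G ⧸ G' := fun x => Quotient.liftOn' x
        (fun g => (QuotientGroup.mk g : G ⧸ G'))
        (fun a b hab => (QuotientGroup.eq).mpr
          (hHG' (QuotientGroup.leftRel_apply.mp hab))) with hπdef
      have hπmk : ∀ g : G, π (QuotientGroup.mk g) = (QuotientGroup.mk g : G ⧸ G') :=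
        fun g => rfl
      set KG : Set G := KGset K G' with hKGdef
      have hKGrinv : ∀ x ∈ KG, ∀ h ∈ H, x * h ∈ KG := by
        rintro x ⟨k, hk, g', hg', rfl⟩ h hh
        exact ⟨k, hk, g' * h, mul_mem hg' (hHG' hh), by group⟩
      set AB : Set (G ⧸ H) := QuotientGroup.mk '' KG with hABdef
      have hmemAB : ∀ g : G, QuotientGroup.mk g ∈ AB ↔ g ∈ KG :=
        fun g => mk_mem_image_iff H hKGrinv
      have hB₀AB : B₀ ⊆ AB := by
        rintro x ⟨g', hg', rfl⟩
        exact ⟨g', ⟨1, one_mem _, g', hg', by group⟩, rfl⟩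
      set Φ₁ : Set (G ⧸ H) := Nout E A ∩ (AB \ B₀) with hΦ₁def
      set Y : Set (G ⧸ H) := Nout E A ∩ ABᶜ with hYdef
      have hsplit : (Nout E A).ncard = N₀.ncard + Φ₁.ncard + Y.ncard := by
        have h0 := ncard_split_three (Nout E A) B₀ (AB \ B₀) Set.disjoint_sdiff_right
        rw [Set.union_diff_cancel hB₀AB] at h0
        rw [← hN₀def, ← hΦ₁def, ← hYdef] at h0
        exact h0
      have hdcim : ∀ t ∈ (S : Set G), ∀ t' ∈ (S : Set G), t ≠ t' →
          Disjoint (QuotientGroup.mk '' dcoset H t : Set (G ⧸ H))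
            (QuotientGroup.mk '' dcoset H t') := by
        intro t ht t' ht' hne
        rw [Set.disjoint_left]
        rintro x ⟨g, hg, rfl⟩ ⟨g2, hg2, hmk⟩
        have hmem : g2⁻¹ * g ∈ H := (QuotientGroup.eq).mp hmk
        have hgeq : g = g2 * (g2⁻¹ * g) := by group
        have hgt' : g ∈ dcoset H t' := hgeq ▸ dcoset_right_mul H hg2 hmem
        exact (Set.disjoint_left.mp (dcoset_disjoint_of_ne H
          (hdc t (Finset.mem_coe.mp ht) t' (Finset.mem_coe.mp ht') hne))) hg hgt'
      classical
      set tD₁ : Finset G := R₂.filter (fun t => t ∉ KG) with htD₁def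
      set tKG : Finset G := R₂.filter (fun t => t ∈ KG) with htKGdef
      set tK : Finset G := tKG.filter (fun t => t ∈ K) with htKdef
      set tD₃ : Finset G := tKG.filter (fun t => t ∉ K) with htD₃def
      have hD₁ : ∑ t ∈ tD₁, dval H t ≤ Y.ncard := by
        refine ncard_sum_le_of_disjoint tD₁ (fun t => QuotientGroup.mk '' dcoset H t) Y ?_ ?_
        · intro t ht
          obtain ⟨htR₂, htKG⟩ := Finset.mem_filter.mp ht
          rintro x ⟨g, hg, rfl⟩
          obtain ⟨h₁, hh₁, h₂, hh₂, rfl⟩ := hg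
          refine ⟨⟨?_, ?_⟩, ?_⟩
          · intro hc
            rw [hmemA] at hc
            have htK' : t ∈ K := by
              have h3 : t = h₁⁻¹ * (h₁ * t * h₂) * h₂⁻¹ := by group
              rw [h3]
              exact mul_mem (mul_mem (inv_mem (hHK hh₁)) hc) (inv_mem (hHK hh₂))
            exact htKG ⟨t, htK', 1, one_mem _, by group⟩
          · exact ⟨QuotientGroup.mk (1 : G), (hmemA 1).mpr (one_mem K),
              (cayleyRel_mk H).mpr ⟨t, hR₂S t htR₂, h₁, hh₁, h₂, hh₂, by group⟩⟩
          · intro hc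
            rw [hmemAB] at hc
            obtain ⟨k, hk, g', hg', heq⟩ := hc
            have ht' : t = (h₁⁻¹ * k) * (g' * h₂⁻¹) := by
              have h3 : t = h₁⁻¹ * (h₁ * t * h₂) * h₂⁻¹ := by group
              rw [h3, heq]; group
            exact htKG ⟨h₁⁻¹ * k, mul_mem (inv_mem (hHK hh₁)) hk,
              g' * h₂⁻¹, mul_mem hg' (inv_mem (hHG' hh₂)), ht'⟩
        · intro t ht t' ht' hne
          exact hdcim t (hR₂S t (Finset.mem_filter.mp ht).1)
            t' (hR₂S t' (Finset.mem_filter.mp ht').1) hne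
      set UK : Set G := ⋃ t ∈ tK, dcoset H t with hUKdef
      set UKQ : Set (G ⧸ H) := QuotientGroup.mk '' UK with hUKQdef
      have hUKK : UK ⊆ (K : Set G) := by
        intro x hx
        rw [Set.mem_iUnion₂] at hx
        obtain ⟨t, ht, h₁, hh₁, h₂, hh₂, rfl⟩ := hx
        have htK' : t ∈ K := (Finset.mem_filter.mp ht).2
        exact mul_mem (mul_mem (hHK hh₁) htK') (hHK hh₂)
      have hUKG' : ∀ x ∈ UK, x ∉ G' := by
        intro x hx hxG'
        rw [Set.mem_iUnion₂] at hx
        obtain ⟨t, ht, h₁, hh₁, h₂, hh₂, rfl⟩ := hx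
        have htG' : t ∈ G' := by
          have h3 : t = h₁⁻¹ * (h₁ * t * h₂) * h₂⁻¹ := by group
          rw [h3]
          exact mul_mem (mul_mem (inv_mem (hHG' hh₁)) hxG') (inv_mem (hHG' hh₂))
        exact hR₂ t (Finset.mem_filter.mp (Finset.mem_filter.mp ht).1).1 htG'
      set W : Set (G ⧸ H) := π ⁻¹' (π '' UKQ) with hWdef
      have hcle : ∑ t ∈ tK, dval H t ≤ UKQ.ncard := by
        refine ncard_sum_le_of_disjoint tK (fun t => QuotientGroup.mk '' dcoset H t) UKQ ?_ ?_
        · intro t ht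
          exact Set.image_mono (fun x hx => Set.mem_biUnion ht hx)
        · intro t ht t' ht' hne
          have h1 := (Finset.mem_filter.mp (Finset.mem_filter.mp ht).1).1
          have h2 := (Finset.mem_filter.mp (Finset.mem_filter.mp ht').1).1
          exact hdcim t (hR₂S t h1) t' (hR₂S t' h2) hne
      have hfibcomp : ∀ b : G ⧸ G',
          (UKQ ∩ π ⁻¹' {b}).ncard ≤ ((Φ₁ ∩ W) ∩ π ⁻¹' {b}).ncard := by
        intro b
        rcases Set.eq_empty_or_nonempty (UKQ ∩ π ⁻¹' {b}) with hemp | ⟨z, hzU, hzb⟩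
        · rw [hemp]; simp
        · obtain ⟨u, huUK, rfl⟩ := hzU
          have huK : u ∈ K := hUKK huUK
          have huG' : u ∉ G' := hUKG' u huUK
          have hzb' : π (QuotientGroup.mk u) = b := hzb
          set uK₀ : Set G := (fun x => u * x) '' ((K ⊓ G' : Subgroup G) : Set G) with huK₀def
          have hsub1 : UKQ ∩ π ⁻¹' {b} ⊆ QuotientGroup.mk '' uK₀ := by
            rintro z ⟨⟨x, hxUK, rfl⟩, hxb⟩
            have hxK : x ∈ K := hUKK hxUK
            have hxb2 : π (QuotientGroup.mk x) = b := hxb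
            have hxu : u⁻¹ * x ∈ G' := by
              have hmkeq : (QuotientGroup.mk u : G ⧸ G') = (QuotientGroup.mk x : G ⧸ G') := by
                rw [hπmk] at hxb2 hzb'
                rw [hzb', hxb2]
              exact (QuotientGroup.eq).mp hmkeq
            have hmem0 : u⁻¹ * x ∈ (K ⊓ G' : Subgroup G) :=
              Subgroup.mem_inf.mpr ⟨mul_mem (inv_mem huK) hxK, hxu⟩
            exact ⟨x, ⟨u⁻¹ * x, hmem0, by group⟩, rfl⟩
          have hsub1card : (UKQ ∩ π ⁻¹' {b}).ncard ≤ p := by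
            refine le_trans (Set.ncard_le_ncard hsub1 (Set.toFinite _)) ?_
            have hrinvu : ∀ x ∈ uK₀, ∀ h ∈ H, x * h ∈ uK₀ := by
              rintro x ⟨k₀, hk₀, rfl⟩ h hh
              exact ⟨k₀ * h, mul_mem hk₀ (Subgroup.mem_inf.mpr ⟨hHK hh, hHG' hh⟩), by group⟩
            have h1 : (QuotientGroup.mk '' uK₀ : Set (G ⧸ H)).ncard * Nat.card H
                = uK₀.ncard := ncard_image_mk_mul_card H uK₀ hrinvu
            have h2 : uK₀.ncard = Nat.card (K ⊓ G' : Subgroup G) := by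
              rw [huK₀def, Set.ncard_image_of_injective _ (mul_right_injective u)]
              exact (Nat.card_coe_set_eq _).symm
            have h3 : (QuotientGroup.mk '' uK₀ : Set (G ⧸ H)).ncard * Nat.card H
                = p * Nat.card H := by rw [h1, h2, hpcard]
            exact le_of_eq (Nat.eq_of_mul_eq_mul_right hcardH h3)
          have hsub2 : (MulAction.toPerm u) '' N₀ ⊆ (Φ₁ ∩ W) ∩ π ⁻¹' {b} := by
            rintro z ⟨y, hyN, rfl⟩
            obtain ⟨g', hg'G', rfl⟩ := hyN.2
            have hz : MulAction.toPerm u ((QuotientGroup.mk g' : G ⧸ H))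
                = (QuotientGroup.mk (u * g') : G ⧸ H) := by
              simp [MulAction.toPerm_apply, smul_mk']
            rw [hz]
            have hfib : π (QuotientGroup.mk (u * g')) = b := by
              rw [hπmk, ← hzb', hπmk]
              symm
              refine (QuotientGroup.eq).mpr ?_
              have hgg : u⁻¹ * (u * g') = g' := by group
              rw [hgg]; exact hg'G'
            refine ⟨⟨⟨?_, ?_, ?_⟩, ?_⟩, ?_⟩
            · have hnu := hNoutmem u huK _ hyN.1
              rwa [smul_mk'] at hnu
            · exact (hmemAB _).mpr ⟨u, huK, g', hg'G', rfl⟩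
            · intro hc
              refine huG' ?_
              have hug : u * g' ∈ G' := (hmemB₀ _).mp hc
              have h5 : u = (u * g') * g'⁻¹ := by group
              rw [h5]; exact mul_mem hug (inv_mem hg'G')
            · exact ⟨QuotientGroup.mk u, ⟨u, huUK, rfl⟩, hzb'.trans hfib.symm⟩
            · exact hfib
          have hsub2card : p ≤ ((Φ₁ ∩ W) ∩ π ⁻¹' {b}).ncard := by
            refine le_trans hpn₀ ?_
            calc N₀.ncard = ((MulAction.toPerm u) '' N₀).ncard :=
                (Set.ncard_image_of_injective _ (MulAction.toPerm u).injective).symm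
              _ ≤ _ := Set.ncard_le_ncard hsub2 (Set.toFinite _)
          exact le_trans hsub1card hsub2card
      have hcX : ∑ t ∈ tK, dval H t ≤ (Φ₁ ∩ W).ncard := by
        calc ∑ t ∈ tK, dval H t ≤ UKQ.ncard := hcle
          _ = ∑ b : G ⧸ G', (UKQ ∩ π ⁻¹' {b}).ncard := ncard_eq_sum_fibers UKQ π
          _ ≤ ∑ b : G ⧸ G', ((Φ₁ ∩ W) ∩ π ⁻¹' {b}).ncard :=
              Finset.sum_le_sum (fun b _ => hfibcomp b)
          _ = (Φ₁ ∩ W).ncard := (ncard_eq_sum_fibers _ π).symm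
      have hD₃ : ∑ t ∈ tD₃, dval H t ≤ (Φ₁ \ W).ncard := by
        refine ncard_sum_le_of_disjoint tD₃ (fun t => QuotientGroup.mk '' dcoset H t) _ ?_ ?_
        · intro t' ht'
          have ht'KG : t' ∈ KG := (Finset.mem_filter.mp (Finset.mem_filter.mp ht').1).2
          have ht'R₂ : t' ∈ R₂ := (Finset.mem_filter.mp (Finset.mem_filter.mp ht').1).1
          have ht'K : t' ∉ K := (Finset.mem_filter.mp ht').2
          rintro x ⟨g, hg, rfl⟩
          obtain ⟨h₁, hh₁, h₂, hh₂, rfl⟩ := hg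
          refine ⟨⟨⟨?_, ?_⟩, ?_, ?_⟩, ?_⟩
          · intro hc
            rw [hmemA] at hc
            refine ht'K ?_
            have h3 : t' = h₁⁻¹ * (h₁ * t' * h₂) * h₂⁻¹ := by group
            rw [h3]
            exact mul_mem (mul_mem (inv_mem (hHK hh₁)) hc) (inv_mem (hHK hh₂))
          · exact ⟨QuotientGroup.mk (1 : G), (hmemA 1).mpr (one_mem K),
              (cayleyRel_mk H).mpr ⟨t', hR₂S t' ht'R₂, h₁, hh₁, h₂, hh₂, by group⟩⟩
          · obtain ⟨k, hk, g', hg', heqt⟩ := ht'KG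
            refine (hmemAB _).mpr ⟨h₁ * k, mul_mem (hHK hh₁) hk,
              g' * h₂, mul_mem hg' (hHG' hh₂), ?_⟩
            rw [heqt]; group
          · intro hc
            have ht'G' : t' ∈ G' := by
              have hg'' := (hmemB₀ _).mp hc
              have h3 : t' = h₁⁻¹ * (h₁ * t' * h₂) * h₂⁻¹ := by group
              rw [h3]
              exact mul_mem (mul_mem (inv_mem (hHG' hh₁)) hg'') (inv_mem (hHG' hh₂))
            exact hR₂ t' ht'R₂ ht'G'
          · intro hcW
            obtain ⟨z, hzUKQ, hzeq⟩ := hcW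
            obtain ⟨xu, hxuUK, rfl⟩ := hzUKQ
            rw [Set.mem_iUnion₂] at hxuUK
            obtain ⟨t, htK2, hxut⟩ := hxuUK
            have htR₂ : t ∈ R₂ := (Finset.mem_filter.mp (Finset.mem_filter.mp htK2).1).1
            have htKmem : t ∈ K := (Finset.mem_filter.mp htK2).2
            have hrel : xu⁻¹ * (h₁ * t' * h₂) ∈ G' := by
              rw [hπmk, hπmk] at hzeq
              exact (QuotientGroup.eq).mp hzeq
            have hd1 : h₁ * t' * h₂ ∈ dcoset G' t' := ⟨h₁, hHG' hh₁, h₂, hHG' hh₂, rfl⟩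
            have hd2 : h₁ * t' * h₂ ∈ dcoset G' t := by
              obtain ⟨a, ha, b, hb, rfl⟩ := hxut
              have h5 : h₁ * t' * h₂
                  = a * t * (b * ((a * t * b)⁻¹ * (h₁ * t' * h₂))) := by group
              rw [h5]
              exact ⟨a, hHG' ha, _, mul_mem (hHG' hb) hrel, rfl⟩
            have hdd : dcoset G' t' = dcoset G' t :=
              (dcoset_eq_of_mem G' hd1).symm.trans (dcoset_eq_of_mem G' hd2)
            have hclo := hsame t' ht'R₂ t htR₂ hdd
            refine ht'K ?_
            have h6 : Subgroup.closure ((H : Set G) ∪ {t}) ≤ K := by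
              rw [Subgroup.closure_le]
              rintro x (hx | hx)
              · exact hHK hx
              · rw [Set.mem_singleton_iff] at hx
                rw [hx]; exact htKmem
            exact h6 (hclo ▸ Subgroup.subset_closure (Or.inr rfl))
        · intro t ht t' ht' hne
          have h1 := (Finset.mem_filter.mp (Finset.mem_filter.mp ht).1).1
          have h2 := (Finset.mem_filter.mp (Finset.mem_filter.mp ht').1).1
          exact hdcim t (hR₂S t h1) t' (hR₂S t' h2) hne
      have hΦ₁split : (Φ₁ ∩ W).ncard + (Φ₁ \ W).ncard = Φ₁.ncard := by
        rw [← Set.ncard_union_eq (by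
            rw [Set.disjoint_left]
            rintro x ⟨_, hxW⟩ ⟨_, hxnW⟩
            exact hxnW hxW) (Set.toFinite _) (Set.toFinite _)]
        rw [Set.inter_union_diff]
      have hsumsplit : ∑ t ∈ R₂, dval H t
          = ∑ t ∈ tK, dval H t + ∑ t ∈ tD₃, dval H t + ∑ t ∈ tD₁, dval H t := by
        have e1 := Finset.sum_filter_add_sum_filter_not tKG (fun t => t ∈ K)
          (fun t => dval H t)
        have e2 := Finset.sum_filter_add_sum_filter_not R₂ (fun t => t ∈ KG)
          (fun t => dval H t)
        rw [← htKdef] at e1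
        rw [← htKGdef] at e2
        have hD₃eq : tKG.filter (fun t => ¬ t ∈ K) = tD₃ := by rw [htD₃def]
        have hD₁eq : R₂.filter (fun t => ¬ t ∈ KG) = tD₁ := by rw [htD₁def]
        rw [hD₃eq] at e1
        rw [hD₁eq] at e2
        omega
      have hfinal : κ' + ∑ t ∈ R₂, dval H t ≤ kappa E := by
        rw [← hκtop, hsplit, hsumsplit]
        omega
      omega

end CCD


open Classical Relation
set_option linter.unusedSectionVars false
set_option maxHeartbeats 1000000

namespace CCD

variable {G : Type*} [Group G]

lemma dcoset_inv_eq (H : Subgroup G) (s : G) :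
    dcoset H s⁻¹ = (fun g : G => g⁻¹) '' dcoset H s := by
  ext g
  constructor
  · rintro ⟨h₁, hh₁, h₂, hh₂, rfl⟩
    exact ⟨h₂⁻¹ * s * h₁⁻¹, ⟨h₂⁻¹, inv_mem hh₂, h₁⁻¹, inv_mem hh₁, rfl⟩, by group⟩
  · rintro ⟨x, ⟨h₁, hh₁, h₂, hh₂, rfl⟩, rfl⟩
    exact ⟨h₂⁻¹, inv_mem hh₂, h₁⁻¹, inv_mem hh₁, by group⟩

lemma dval_inv [Finite G] (H : Subgroup G) (s : G) : dval H s⁻¹ = dval H s := by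
  have h1 : (dcoset H s⁻¹).ncard = (dcoset H s).ncard := by
    rw [dcoset_inv_eq, Set.ncard_image_of_injective _ inv_injective]
  have h2 := ncard_image_mk_mul_card H (dcoset H s)
    (fun x hx h hh => dcoset_right_mul H hx hh)
  have h3 := ncard_image_mk_mul_card H (dcoset H s⁻¹)
    (fun x hx h hh => dcoset_right_mul H hx hh)
  have hpos : 0 < Nat.card H := Nat.card_pos
  unfold dval
  exact Nat.eq_of_mul_eq_mul_right hpos (by rw [h3, h1, ← h2])

lemma cayleyRel_eq_flip (H : Subgroup G) (S' S : Set G)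
    (h : ∀ g, g ∈ S' ↔ g⁻¹ ∈ S) : cayleyRel H S' = flip (cayleyRel H S) := by
  funext x y
  apply propext
  constructor
  · rintro ⟨s', hs', g₁, g₂, h1, h2, h₁, hh₁, h₂, hh₂, heq⟩
    refine ⟨s'⁻¹, (h s').mp hs', g₂, g₁, h2, h1, h₂⁻¹, inv_mem hh₂, h₁⁻¹, inv_mem hh₁, ?_⟩
    rw [show g₂⁻¹ * g₁ = (g₁⁻¹ * g₂)⁻¹ by group, heq]
    group
  · rintro ⟨s, hs, g₁, g₂, h1, h2, h₁, hh₁, h₂, hh₂, heq⟩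
    refine ⟨s⁻¹, (h s⁻¹).mpr (by rwa [inv_inv]), g₂, g₁, h2, h1,
      h₂⁻¹, inv_mem hh₂, h₁⁻¹, inv_mem hh₁, ?_⟩
    rw [show g₂⁻¹ * g₁ = (g₁⁻¹ * g₂)⁻¹ by group, heq]
    group

lemma sc_flip {V : Type*} [Finite V] {E : V → V → Prop} (h : SC E) : SC (flip E) :=
  fun a b => ReflTransGen.mono (fun _ _ hxy => hxy) _ _ (rtg_rev (h b a))

lemma closure_union_image_inv (H : Subgroup G) (R : Finset G) [DecidableEq G] :
    Subgroup.closure ((H : Set G) ∪ ((R.image (fun g => g⁻¹) : Finset G) : Set G))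
      = Subgroup.closure ((H : Set G) ∪ (R : Set G)) := by
  apply le_antisymm
  · rw [Subgroup.closure_le]
    rintro x (hx | hx)
    · exact Subgroup.subset_closure (Or.inl hx)
    · obtain ⟨r, hr, rfl⟩ := Finset.mem_image.mp (Finset.mem_coe.mp hx)
      exact inv_mem (Subgroup.subset_closure (Or.inr (Finset.mem_coe.mpr hr)))
  · rw [Subgroup.closure_le]
    rintro x (hx | hx)
    · exact Subgroup.subset_closure (Or.inl hx)
    · have h1 : x⁻¹ ∈ (R.image (fun g => g⁻¹) : Finset G) :=
        Finset.mem_image.mpr ⟨x, Finset.mem_coe.mp hx, rfl⟩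
      have h2 : x⁻¹ ∈ Subgroup.closure
          ((H : Set G) ∪ ((R.image (fun g => g⁻¹) : Finset G) : Set G)) :=
        Subgroup.subset_closure (Or.inr (Finset.mem_coe.mpr h1))
      simpa using inv_mem h2

lemma closure_union_singleton_inv (H : Subgroup G) (g : G) :
    Subgroup.closure ((H : Set G) ∪ {g⁻¹}) = Subgroup.closure ((H : Set G) ∪ {g}) := by
  apply le_antisymm
  · rw [Subgroup.closure_le]
    rintro x (hx | hx)
    · exact Subgroup.subset_closure (Or.inl hx)
    · rw [Set.mem_singleton_iff] at hx
      rw [hx]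
      exact inv_mem (Subgroup.subset_closure (Or.inr rfl))
  · rw [Subgroup.closure_le]
    rintro x (hx | hx)
    · exact Subgroup.subset_closure (Or.inl hx)
    · rw [Set.mem_singleton_iff] at hx
      rw [hx]
      have h2 : g⁻¹ ∈ Subgroup.closure ((H : Set G) ∪ {g⁻¹}) :=
        Subgroup.subset_closure (Or.inr rfl)
      simpa using inv_mem h2

end CCD

/-- Main theorem: if `R₁, R₂` partition `S`, the subgroup `G' = ⟨H ∪ R₁⟩ contains no
element of `R₂`, and generators of `R₂` lying in the same double coset of `G'`
generate with `H` the same subgroup, then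
`κ(𝒢) ≥ min(|G'/H|, κ(𝒢') + d_{R₂})` where `𝒢' = 𝒢(G',H,R₁)`. -/
theorem stmt_10 {G : Type*} [Group G] [Finite G] (H : Subgroup G) (S R₁ R₂ : Finset G)
    (hSH : ∀ s ∈ S, s ∉ H)
    (hdc : ∀ s ∈ S, ∀ t ∈ S, s ≠ t → dcoset H s ≠ dcoset H t)
    (hconn : SC (cayleyRel H (S : Set G)))
    (hunion : R₁ ∪ R₂ = S) (hdisj : Disjoint R₁ R₂)
    (G' : Subgroup G) (hG' : G' = Subgroup.closure ((H : Set G) ∪ (R₁ : Set G)))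
    (hR₂ : ∀ r ∈ R₂, r ∉ G')
    (hsame : ∀ r ∈ R₂, ∀ t ∈ R₂, dcoset G' r = dcoset G' t →
      Subgroup.closure ((H : Set G) ∪ {r}) = Subgroup.closure ((H : Set G) ∪ {t})) :
    min (Nat.card (G' ⧸ H.subgroupOf G'))
      (kappa (cayleyRel (H.subgroupOf G')
          ((Subtype.val ⁻¹' (R₁ : Set G)) : Set G')) + ∑ s ∈ R₂, dval H s) ≤
    kappa (cayleyRel H (S : Set G)) := by
  classical
  by_cases hsep : ∃ T : Set (G ⧸ H), ¬ SCOn (cayleyRel H (S : Set G)) Tᶜ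
  · -- separators exist
    have hsepflip : ∃ T : Set (G ⧸ H), ¬ SCOn (flip (cayleyRel H (S : Set G))) Tᶜ := by
      obtain ⟨T, hT⟩ := hsep
      exact ⟨T, fun hc => hT (CCD.scon_flip_iff.mp hc)⟩
    obtain ⟨A₁, hA₁⟩ := CCD.exists_atom hsep
    obtain ⟨B₁, hB₁⟩ := CCD.exists_atom hsepflip
    by_cases hcmp : A₁.ncard ≤ B₁.ncard
    · refine CCD.main_dir H S R₁ R₂ hdc hconn hunion G' hG' hR₂ hsame hsep ?_
      intro A B hA hB
      calc A.ncard = A₁.ncard := CCD.atom_ncard_eq hA hA₁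
        _ ≤ B₁.ncard := hcmp
        _ = B.ncard := CCD.atom_ncard_eq hB₁ hB
    · push_neg at hcmp
      set Sv := S.image (fun g => g⁻¹) with hSv
      set R₁v := R₁.image (fun g => g⁻¹) with hR₁v
      set R₂v := R₂.image (fun g => g⁻¹) with hR₂v
      have hmemSv : ∀ g : G, g ∈ (Sv : Set G) ↔ g⁻¹ ∈ (S : Set G) := by
        intro g
        simp only [hSv, Finset.coe_image, Set.mem_image, Finset.mem_coe]
        constructor
        · rintro ⟨a, ha, rfl⟩; simpa using ha
        · intro hg; exact ⟨g⁻¹, hg, by group⟩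
      have hrelflip : cayleyRel H (Sv : Set G) = flip (cayleyRel H (S : Set G)) :=
        CCD.cayleyRel_eq_flip H _ _ hmemSv
      have hdc' : ∀ s ∈ Sv, ∀ t ∈ Sv, s ≠ t → dcoset H s ≠ dcoset H t := by
        intro s hs t ht hst
        obtain ⟨a, ha, rfl⟩ := Finset.mem_image.mp hs
        obtain ⟨b, hb, rfl⟩ := Finset.mem_image.mp ht
        have hab : a ≠ b := fun h => hst (by rw [h])
        intro hdd
        rw [CCD.dcoset_inv_eq, CCD.dcoset_inv_eq] at hdd
        exact hdc a ha b hb hab (Set.image_injective.mpr inv_injective hdd)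
      have hconn' : SC (cayleyRel H (Sv : Set G)) := by
        rw [hrelflip]; exact CCD.sc_flip hconn
      have hunion' : R₁v ∪ R₂v = Sv := by
        rw [hR₁v, hR₂v, hSv, ← Finset.image_union, hunion]
      have hG'2 : G' = Subgroup.closure ((H : Set G) ∪ (R₁v : Set G)) := by
        rw [hR₁v, CCD.closure_union_image_inv H R₁, ← hG']
      have hR₂' : ∀ r ∈ R₂v, r ∉ G' := by
        intro r hr
        obtain ⟨a, ha, rfl⟩ := Finset.mem_image.mp hr
        intro hc
        exact hR₂ a ha (by simpa using inv_mem hc)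
      have hsame' : ∀ r ∈ R₂v, ∀ t ∈ R₂v, dcoset G' r = dcoset G' t →
          Subgroup.closure ((H : Set G) ∪ {r}) = Subgroup.closure ((H : Set G) ∪ {t}) := by
        intro r hr t ht hdd
        obtain ⟨a, ha, rfl⟩ := Finset.mem_image.mp hr
        obtain ⟨b, hb, rfl⟩ := Finset.mem_image.mp ht
        rw [CCD.dcoset_inv_eq, CCD.dcoset_inv_eq] at hdd
        have h2 := hsame a ha b hb (Set.image_injective.mpr inv_injective hdd)
        rw [CCD.closure_union_singleton_inv, CCD.closure_union_singleton_inv]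
        exact h2
      have hsep' : ∃ T : Set (G ⧸ H), ¬ SCOn (cayleyRel H (Sv : Set G)) Tᶜ := by
        rw [hrelflip]; exact hsepflip
      have hdir' : ∀ A B : Set (G ⧸ H), IsAtomD (cayleyRel H (Sv : Set G)) A →
          IsAtomD (flip (cayleyRel H (Sv : Set G))) B → A.ncard ≤ B.ncard := by
        intro A B hA hB
        rw [hrelflip] at hA hB
        have hBE : IsAtomD (cayleyRel H (S : Set G)) B := by
          have hff : flip (flip (cayleyRel H (S : Set G))) = cayleyRel H (S : Set G) := rfl
          rwa [hff] at hB
        calc A.ncard = B₁.ncard := CCD.atom_ncard_eq hA hB₁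
          _ ≤ A₁.ncard := le_of_lt hcmp
          _ = B.ncard := CCD.atom_ncard_eq hA₁ hBE
      have hmain := CCD.main_dir H Sv R₁v R₂v hdc' hconn' hunion' G' hG'2 hR₂' hsame'
        hsep' hdir'
      have hd : ∑ s ∈ R₂v, dval H s = ∑ s ∈ R₂, dval H s := by
        rw [hR₂v, Finset.sum_image (fun x _ y _ h => inv_injective h)]
        exact Finset.sum_congr rfl (fun t _ => CCD.dval_inv H t)
      have hκ'eq : kappa (cayleyRel (H.subgroupOf G')
            ((Subtype.val ⁻¹' (R₁v : Set G)) : Set G'))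
          = kappa (cayleyRel (H.subgroupOf G')
            ((Subtype.val ⁻¹' (R₁ : Set G)) : Set G')) := by
        have hmem : ∀ g : G', g ∈ ((Subtype.val ⁻¹' (R₁v : Set G)) : Set G')
            ↔ g⁻¹ ∈ ((Subtype.val ⁻¹' (R₁ : Set G)) : Set G') := by
          intro g
          constructor
          · intro hg
            obtain ⟨a, ha, haeq⟩ := Finset.mem_image.mp (Finset.mem_coe.mp hg)
            show ((g⁻¹ : G') : G) ∈ (R₁ : Set G)
            have h1 : ((g⁻¹ : G') : G) = (g : G)⁻¹ := rfl
            have h2 : (g : G)⁻¹ = a := by rw [← haeq]; group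
            rw [h1, h2]
            exact Finset.mem_coe.mpr ha
          · intro hg
            show (g : G) ∈ (R₁v : Set G)
            refine Finset.mem_coe.mpr (Finset.mem_image.mpr
              ⟨((g⁻¹ : G') : G), Finset.mem_coe.mp hg, ?_⟩)
            show ((g⁻¹ : G') : G)⁻¹ = (g : G)
            rw [show ((g⁻¹ : G') : G) = (g : G)⁻¹ from rfl]
            group
        rw [CCD.cayleyRel_eq_flip (H.subgroupOf G') _ _ hmem, CCD.kappa_flip]
      have hκflip : kappa (cayleyRel H (Sv : Set G)) = kappa (cayleyRel H (S : Set G)) := by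
        rw [hrelflip, CCD.kappa_flip]
      rw [hd, hκ'eq, hκflip] at hmain
      exact hmain
  · -- no separator at all
    have hκ : kappa (cayleyRel H (S : Set G)) = Nat.card (G ⧸ H) - 1 := by
      rw [kappa, if_neg hsep]
    rw [hκ]
    have hHG' : H ≤ G' := by
      rw [hG']; exact fun x hx => Subgroup.subset_closure (Or.inl hx)
    have hqH := CCD.q_mul_card H G' hHG'
    have hLag : Nat.card G = Nat.card (G ⧸ H) * Nat.card H :=
      Subgroup.card_eq_card_quotient_mul_card_subgroup H
    have hidx := Subgroup.index_mul_card G'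
    have hidx0 : G'.index ≠ 0 := Subgroup.index_ne_zero_of_finite
    have hcardH : 0 < Nat.card H := Nat.card_pos
    have hG'pos : 0 < Nat.card G' := Nat.card_pos
    have hq1 : 1 ≤ Nat.card (G' ⧸ H.subgroupOf G') := Nat.card_pos
    by_cases hR₂e : R₂ = ∅
    · have hd0 : ∑ s ∈ R₂, dval H s = 0 := by rw [hR₂e]; simp
      have hκ'le := CCD.kappa_le_card (E := cayleyRel (H.subgroupOf G')
        ((Subtype.val ⁻¹' (R₁ : Set G)) : Set G'))
      have hqle : Nat.card (G' ⧸ H.subgroupOf G') * Nat.card H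
          ≤ Nat.card (G ⧸ H) * Nat.card H := by
        rw [hqH, ← hLag]
        calc Nat.card G' ≤ G'.index * Nat.card G' :=
              Nat.le_mul_of_pos_left _ (by omega)
          _ = Nat.card G := hidx
      have hqle2 : Nat.card (G' ⧸ H.subgroupOf G') ≤ Nat.card (G ⧸ H) :=
        Nat.le_of_mul_le_mul_right hqle hcardH
      refine le_trans (min_le_right _ _) ?_
      omega
    · obtain ⟨r, hr⟩ := Finset.nonempty_iff_ne_empty.mpr hR₂e
      have hG'ne : G' ≠ ⊤ := by
        intro hc
        exact hR₂ r hr (hc ▸ Subgroup.mem_top r)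
      have hidx2 : 2 ≤ G'.index := by
        rcases Nat.lt_or_ge G'.index 2 with h | h
        · exfalso
          have h1 : G'.index = 1 := by omega
          exact hG'ne (Subgroup.index_eq_one.mp h1)
        · exact h
      have h2q : 2 * (Nat.card (G' ⧸ H.subgroupOf G') * Nat.card H)
          ≤ Nat.card (G ⧸ H) * Nat.card H := by
        rw [hqH, ← hLag]
        calc 2 * Nat.card G' ≤ G'.index * Nat.card G' :=
              Nat.mul_le_mul_right _ hidx2
          _ = Nat.card G := hidx
      have h2q2 : 2 * Nat.card (G' ⧸ H.subgroupOf G') ≤ Nat.card (G ⧸ H) := by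
        refine Nat.le_of_mul_le_mul_right ?_ hcardH
        calc 2 * Nat.card (G' ⧸ H.subgroupOf G') * Nat.card H
            = 2 * (Nat.card (G' ⧸ H.subgroupOf G') * Nat.card H) := by ring
          _ ≤ Nat.card (G ⧸ H) * Nat.card H := h2q
      refine le_trans (min_le_left _ _) ?_
      omega
end

section
/- Let 𝒢 = 𝒢(G,H,S) be a strongly connected, hierarchical Cayley coset digraph whose generators are distinct double-coset representatives, with the generators ordered as s₁,…,s_k (k ≥ 2) so that the subgroups G_i = ⟨H ∪ {s₁,…,s_i}⟩ are pairwise distinct. Let d_i = d_{s₁} + … + d_{s_i}. Suppose d_{s_{i+1}} ≤ d_i for each i < k, and Hs₁⁻¹H ≠ Hs₁H. Then κ(𝒢) = d(𝒢) = Σ_{s∈S} d_s. -/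
open Classical

/-- `Gᵢ = ⟨H ∪ {s₁,…,sᵢ}⟩` for an ordered list of generators. -/
def towerGroup1 {G : Type*} [Group G] [DecidableEq G] (H : Subgroup G)
    (s : ℕ → G) (i : ℕ) : Subgroup G :=
  Subgroup.closure ((H : Set G) ∪ ((Finset.Icc 1 i).image s : Finset G))

set_option linter.unusedSectionVars false
set_option linter.unusedVariables false
set_option maxHeartbeats 1000000
section Digraph
variable {V : Type*} [Finite V]

def flipR {V : Type*} (E : V → V → Prop) : V → V → Prop := fun x y => E y x

theorem flipR_flipR (E : V → V → Prop) : flipR (flipR E) = E := rfl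

theorem scOn_flip (E : V → V → Prop) (A : Set V) : SCOn (flipR E) A ↔ SCOn E A := by
  have key : ∀ (E : V → V → Prop) (a b : V),
      Relation.ReflTransGen (fun x y => x ∈ A ∧ y ∈ A ∧ flipR E x y) a b →
      Relation.ReflTransGen (fun x y => x ∈ A ∧ y ∈ A ∧ E x y) b a := by
    intro E a b h
    induction h with
    | refl => exact .refl
    | tail _ h ih => exact Relation.ReflTransGen.head ⟨h.2.1, h.1, h.2.2⟩ ih
  constructor
  · intro h a ha b hb; exact key E b a (h b hb a ha)
  · intro h a ha b hb; exact key (flipR E) b a (h b hb a ha)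

theorem kappa_flip (E : V → V → Prop) : kappa (flipR E) = kappa E := by
  unfold kappa
  have h1 : (∃ T : Set V, ¬ SCOn (flipR E) Tᶜ) ↔ (∃ T : Set V, ¬ SCOn E Tᶜ) := by
    constructor <;> rintro ⟨T, hT⟩ <;> exact ⟨T, by simpa [scOn_flip] using hT⟩
  have h2 : {m | ∃ T : Set V, T.ncard = m ∧ ¬ SCOn (flipR E) Tᶜ}
      = {m | ∃ T : Set V, T.ncard = m ∧ ¬ SCOn E Tᶜ} := by
    ext m; constructor <;> rintro ⟨T, hm, hT⟩ <;> exact ⟨T, hm, by simpa [scOn_flip] using hT⟩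
  rw [h1, h2]

theorem part_not_scOn {E : V → V → Prop} {F : Set V} (hF : IsPart E F) :
    ¬ SCOn E (Nout E F)ᶜ := by
  obtain ⟨⟨a, ha⟩, ⟨b, hb⟩⟩ := hF
  intro h
  have hbn : b ∈ (Nout E F)ᶜ := fun hbN => hb (Set.mem_union_right _ hbN)
  have han : a ∈ (Nout E F)ᶜ := fun haN => haN.1 ha
  have hreach := h a han b hbn
  have key : ∀ c, Relation.ReflTransGen
      (fun x y => x ∈ (Nout E F)ᶜ ∧ y ∈ (Nout E F)ᶜ ∧ E x y) a c → c ∈ F := by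
    intro c hc
    induction hc with
    | refl => exact ha
    | @tail p q _ h ih =>
      by_contra hq
      exact h.2.1 ⟨hq, p, ih, h.2.2⟩
  exact hb (Set.mem_union_left _ (key b hreach))

theorem kappa_le_of_part {E : V → V → Prop} {F : Set V} (hF : IsPart E F) :
    kappa E ≤ (Nout E F).ncard := by
  have hcut := part_not_scOn hF
  rw [kappa, if_pos ⟨Nout E F, hcut⟩]
  exact Nat.sInf_le ⟨Nout E F, rfl, hcut⟩

theorem exists_part_of_cut {E : V → V → Prop} {T : Set V} (h : ¬ SCOn E Tᶜ) :
    ∃ F : Set V, IsPart E F ∧ Nout E F ⊆ T := by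
  simp only [SCOn, not_forall] at h
  obtain ⟨a, ha, b, hb, hab⟩ := h
  set F : Set V := {c | c ∈ Tᶜ ∧
    Relation.ReflTransGen (fun x y => x ∈ Tᶜ ∧ y ∈ Tᶜ ∧ E x y) a c} with hFdef
  have hsub : Nout E F ⊆ T := by
    rintro y ⟨hyF, x, hxF, hxy⟩
    by_contra hyT
    exact hyF ⟨hyT, hxF.2.tail ⟨hxF.1, hyT, hxy⟩⟩
  refine ⟨F, ⟨⟨a, ha, .refl⟩, ⟨b, ?_⟩⟩, hsub⟩
  rintro (hbF | hbN)
  · exact hab hbF.2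
  · exact hb (hsub hbN)

def IsFrag (E : V → V → Prop) (F : Set V) : Prop :=
  IsPart E F ∧ (Nout E F).ncard = kappa E

theorem exists_frag {E : V → V → Prop} (hg : ∃ T : Set V, ¬ SCOn E Tᶜ) :
    ∃ F, IsFrag E F := by
  have hne : {m | ∃ T : Set V, T.ncard = m ∧ ¬ SCOn E Tᶜ}.Nonempty := by
    obtain ⟨T, hT⟩ := hg; exact ⟨T.ncard, T, rfl, hT⟩
  obtain ⟨T, hTc, hT⟩ := Nat.sInf_mem hne
  obtain ⟨F, hF, hsub⟩ := exists_part_of_cut hT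
  have hk : kappa E = sInf {m | ∃ T : Set V, T.ncard = m ∧ ¬ SCOn E Tᶜ} := by
    rw [kappa, if_pos hg]
  refine ⟨F, hF, le_antisymm ?_ ?_⟩
  · calc (Nout E F).ncard ≤ T.ncard := Set.ncard_le_ncard hsub (Set.toFinite T)
    _ = kappa E := by rw [hk, hTc]
  · exact kappa_le_of_part hF



theorem nout_disjoint (E : V → V → Prop) (A : Set V) : Disjoint A (Nout E A) :=
  Set.disjoint_left.mpr (fun _ hx hnx => hnx.1 hx)

theorem ncard_part_add (E : V → V → Prop) (A : Set V) :
    A.ncard + (Nout E A).ncard + ((A ∪ Nout E A)ᶜ).ncard = Nat.card V := by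
  rw [← Set.ncard_union_eq (nout_disjoint E A) (Set.toFinite _) (Set.toFinite _)]
  exact Set.ncard_add_ncard_compl _

theorem nout_submod (E : V → V → Prop) (X Y : Set V) :
    (Nout E (X ∩ Y)).ncard + (Nout E (X ∪ Y)).ncard
      ≤ (Nout E X).ncard + (Nout E Y).ncard := by
  have h1 : Nout E (X ∩ Y) ∪ Nout E (X ∪ Y) ⊆ Nout E X ∪ Nout E Y := by
    rintro z (⟨hz, x, hx, e⟩ | ⟨hz, x, hx, e⟩)
    · by_cases hzX : z ∈ X
      · exact Or.inr ⟨fun hzY => hz ⟨hzX, hzY⟩, x, hx.2, e⟩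
      · exact Or.inl ⟨hzX, x, hx.1, e⟩
    · rcases hx with hx | hx
      · exact Or.inl ⟨fun h => hz (Or.inl h), x, hx, e⟩
      · exact Or.inr ⟨fun h => hz (Or.inr h), x, hx, e⟩
  have h2 : Nout E X ∩ Nout E Y ⊆ Nout E X ∩ Nout E Y := le_refl _
  have h3 : Nout E (X ∩ Y) ∩ Nout E (X ∪ Y) ⊆ Nout E X ∩ Nout E Y := by
    rintro z ⟨⟨_, x, hx, e⟩, ⟨hz, _⟩⟩
    exact ⟨⟨fun h => hz (Or.inl h), x, hx.1, e⟩, ⟨fun h => hz (Or.inr h), x, hx.2, e⟩⟩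
  calc (Nout E (X ∩ Y)).ncard + (Nout E (X ∪ Y)).ncard
      = (Nout E (X ∩ Y) ∪ Nout E (X ∪ Y)).ncard
        + (Nout E (X ∩ Y) ∩ Nout E (X ∪ Y)).ncard := by
        rw [Set.ncard_union_add_ncard_inter _ _ (Set.toFinite _) (Set.toFinite _)]
    _ ≤ (Nout E X ∪ Nout E Y).ncard + (Nout E X ∩ Nout E Y).ncard :=
        add_le_add (Set.ncard_le_ncard h1 (Set.toFinite _))
          (Set.ncard_le_ncard h3 (Set.toFinite _))
    _ = (Nout E X).ncard + (Nout E Y).ncard := by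
        rw [Set.ncard_union_add_ncard_inter _ _ (Set.toFinite _) (Set.toFinite _)]

theorem bar_union (E : V → V → Prop) (X Y : Set V) :
    ((X ∪ Y) ∪ Nout E (X ∪ Y))ᶜ = (X ∪ Nout E X)ᶜ ∩ (Y ∪ Nout E Y)ᶜ := by
  ext z
  simp only [Set.mem_compl_iff, Set.mem_union, Set.mem_inter_iff, not_or]
  constructor
  · rintro ⟨⟨hzX, hzY⟩, hzN⟩
    refine ⟨⟨hzX, fun ⟨_, x, hx, e⟩ => hzN ⟨?_, x, Or.inl hx, e⟩⟩,
      ⟨hzY, fun ⟨_, x, hx, e⟩ => hzN ⟨?_, x, Or.inr hx, e⟩⟩⟩ <;>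
      rintro (h | h) <;> first | exact hzX h | exact hzY h
  · rintro ⟨⟨hzX, hzNX⟩, ⟨hzY, hzNY⟩⟩
    refine ⟨⟨hzX, hzY⟩, fun ⟨hz, x, hx, e⟩ => ?_⟩
    rcases hx with hx | hx
    · exact hzNX ⟨hzX, x, hx, e⟩
    · exact hzNY ⟨hzY, x, hx, e⟩

noncomputable def atomN (E : V → V → Prop) : ℕ := sInf {m | ∃ F, IsFrag E F ∧ F.ncard = m}

def IsAtomMy (E : V → V → Prop) (A : Set V) : Prop := IsFrag E A ∧ A.ncard = atomN E

theorem exists_atomMy {E : V → V → Prop} (hg : ∃ T : Set V, ¬ SCOn E Tᶜ) :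
    ∃ A, IsAtomMy E A := by
  obtain ⟨F, hF⟩ := exists_frag hg
  obtain ⟨A, hA, hcard⟩ := Nat.sInf_mem (⟨F.ncard, F, hF, rfl⟩ :
    Set.Nonempty {m | ∃ F, IsFrag E F ∧ F.ncard = m})
  exact ⟨A, hA, hcard⟩

theorem atomN_le {E : V → V → Prop} {F : Set V} (hF : IsFrag E F) : atomN E ≤ F.ncard :=
  Nat.sInf_le ⟨F, hF, rfl⟩

theorem bar_flip_frag {E : V → V → Prop} {A : Set V} (hA : IsFrag E A) :
    IsFrag (flipR E) ((A ∪ Nout E A)ᶜ) := by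
  have hsub : Nout (flipR E) ((A ∪ Nout E A)ᶜ) ⊆ Nout E A := by
    rintro z ⟨hzB, y, hyB, (e : E z y)⟩
    by_cases hzA : z ∈ A
    · exact absurd (by
        by_cases hyA : y ∈ A
        · exact Or.inl hyA
        · exact Or.inr ⟨hyA, z, hzA, e⟩) hyB
    · rcases not_not.mp (fun h => hzB h) with h | h
      · exact absurd h hzA
      · exact h
  have hpart : IsPart (flipR E) ((A ∪ Nout E A)ᶜ) := by
    refine ⟨hA.1.2, ?_⟩
    obtain ⟨a, ha⟩ := hA.1.1
    refine ⟨a, fun hmem => ?_⟩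
    rcases hmem with h | h
    · exact h (Or.inl ha)
    · exact (hsub h).1 ha
  refine ⟨hpart, le_antisymm ?_ ?_⟩
  · calc (Nout (flipR E) ((A ∪ Nout E A)ᶜ)).ncard ≤ (Nout E A).ncard :=
        Set.ncard_le_ncard hsub (Set.toFinite _)
    _ = kappa E := hA.2
    _ = kappa (flipR E) := (kappa_flip E).symm
  · exact (kappa_flip E) ▸ kappa_le_of_part hpart

theorem atom_eq_of_inter {E : V → V → Prop}
    (hflip : ∀ F, IsFrag (flipR E) F → atomN E ≤ F.ncard)
    {A B : Set V} (hA : IsAtomMy E A) (hB : IsAtomMy E B)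
    (hAB : (A ∩ B).Nonempty) : A = B := by
  have hsubA : Nout E (A ∩ B) ⊆ A ∪ Nout E A := by
    rintro z ⟨hz, x, hx, e⟩
    by_cases hzA : z ∈ A
    · exact Or.inl hzA
    · exact Or.inr ⟨hzA, x, hx.1, e⟩
  have hsubB : Nout E (A ∩ B) ⊆ B ∪ Nout E B := by
    rintro z ⟨hz, x, hx, e⟩
    by_cases hzB : z ∈ B
    · exact Or.inl hzB
    · exact Or.inr ⟨hzB, x, hx.2, e⟩
  have hpartAB : IsPart E (A ∩ B) := by
    refine ⟨hAB, ?_⟩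
    obtain ⟨w, hw⟩ := hA.1.1.2
    refine ⟨w, fun hmem => hw ?_⟩
    rcases hmem with h | h
    · exact Or.inl h.1
    · exact hsubA h
  have hkAB : kappa E ≤ (Nout E (A ∩ B)).ncard := kappa_le_of_part hpartAB
  have hsm := nout_submod E A B
  rw [hA.1.2, hB.1.2] at hsm
  by_cases hbar : (((A ∪ Nout E A)ᶜ) ∩ ((B ∪ Nout E B)ᶜ)).Nonempty
  · -- good case
    have hpartU : IsPart E (A ∪ B) := by
      refine ⟨hA.1.1.1.mono Set.subset_union_left, ?_⟩
      rw [bar_union]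
      exact hbar
    have hkU : kappa E ≤ (Nout E (A ∪ B)).ncard := kappa_le_of_part hpartU
    have hABk : (Nout E (A ∩ B)).ncard = kappa E := by omega
    have hfragAB : IsFrag E (A ∩ B) := ⟨hpartAB, hABk⟩
    have h1 : atomN E ≤ (A ∩ B).ncard := atomN_le hfragAB
    have hAn : A.ncard = atomN E := hA.2
    have hBn : B.ncard = atomN E := hB.2
    have h2 : (A ∩ B).ncard ≤ A.ncard :=
      Set.ncard_le_ncard Set.inter_subset_left (Set.toFinite _)
    have h3 : (A ∩ B).ncard ≤ B.ncard :=
      Set.ncard_le_ncard Set.inter_subset_right (Set.toFinite _)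
    have hABA : A ∩ B = A :=
      Set.eq_of_subset_of_ncard_le Set.inter_subset_left (by omega) (Set.toFinite _)
    have hABB : A ∩ B = B :=
      Set.eq_of_subset_of_ncard_le Set.inter_subset_right (by omega) (Set.toFinite _)
    rw [← hABA, hABB]
  · -- bad case: impossible
    exfalso
    have hempty : ((A ∪ B) ∪ Nout E (A ∪ B))ᶜ = ∅ := by
      rw [bar_union]
      exact Set.not_nonempty_iff_eq_empty.mp hbar
    have hpU := ncard_part_add E (A ∪ B)
    rw [hempty, Set.ncard_empty] at hpU
    have hpA := ncard_part_add E A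
    rw [hA.1.2] at hpA
    have hkU : (Nout E (A ∪ B)).ncard ≤ kappa E := by omega
    have hui := Set.ncard_union_add_ncard_inter A B (Set.toFinite _) (Set.toFinite _)
    have hbarA : atomN E ≤ ((A ∪ Nout E A)ᶜ).ncard := hflip _ (bar_flip_frag hA.1)
    have hpos : 0 < (A ∩ B).ncard := (Set.ncard_pos (Set.toFinite _)).mpr hAB
    have hBn : B.ncard = atomN E := hB.2
    omega

def completeD (E : V → V → Prop) : Prop := ∀ x y : V, x ≠ y → E x y

theorem nout_image {E : V → V → Prop} (e : V ≃ V) (hE : ∀ x y, E (e x) (e y) ↔ E x y)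
    (A : Set V) : Nout E (e '' A) = e '' Nout E A := by
  ext z
  obtain ⟨w, rfl⟩ := e.surjective z
  simp only [Nout, Set.mem_image, Set.mem_setOf_eq]
  constructor
  · rintro ⟨hz, y, ⟨u, hu, rfl⟩, he⟩
    exact ⟨w, ⟨fun hw => hz ⟨w, hw, rfl⟩, u, hu, (hE u w).mp he⟩, rfl⟩
  · rintro ⟨w', ⟨hw', u, hu, he⟩, hww⟩
    have hww' : w' = w := e.injective hww
    subst hww'
    exact ⟨fun ⟨v, hv, hvw⟩ => hw' (e.injective hvw ▸ hv), e u, ⟨u, hu, rfl⟩,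
      (hE u w').mpr he⟩

theorem part_image {E : V → V → Prop} (e : V ≃ V) (hE : ∀ x y, E (e x) (e y) ↔ E x y)
    (A : Set V) : IsPart E (e '' A) ↔ IsPart E A := by
  unfold IsPart
  rw [nout_image e hE, ← Set.image_union, ← Equiv.image_compl]
  constructor
  · rintro ⟨h1, h2⟩
    exact ⟨(Set.image_nonempty (f := e)).mp h1, (Set.image_nonempty (f := e)).mp h2⟩
  · rintro ⟨h1, h2⟩
    exact ⟨h1.image e, h2.image e⟩

theorem atomMy_image {E : V → V → Prop} (e : V ≃ V) (hE : ∀ x y, E (e x) (e y) ↔ E x y)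
    {A : Set V} (hA : IsAtomMy E A) : IsAtomMy E (e '' A) := by
  refine ⟨⟨(part_image e hE A).mpr hA.1.1, ?_⟩, ?_⟩
  · rw [nout_image e hE, Set.ncard_image_of_injective _ e.injective]
    exact hA.1.2
  · rw [Set.ncard_image_of_injective _ e.injective]
    exact hA.2

end Digraph
section CosetCounting
variable {G : Type*} [Group G] [Finite G] {H : Subgroup G}

theorem mem_dcoset_self (H : Subgroup G) (s : G) : s ∈ dcoset H s :=
  ⟨1, one_mem _, 1, one_mem _, by group⟩

theorem dcoset_mul_right {s w : G} (hw : w ∈ dcoset H s) {h : G} (hh : h ∈ H) :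
    w * h ∈ dcoset H s := by
  obtain ⟨h₁, hh₁, h₂, hh₂, rfl⟩ := hw
  exact ⟨h₁, hh₁, h₂ * h, mul_mem hh₂ hh, by group⟩

theorem dcoset_mul_left {s w : G} (hw : w ∈ dcoset H s) {h : G} (hh : h ∈ H) :
    h * w ∈ dcoset H s := by
  obtain ⟨h₁, hh₁, h₂, hh₂, rfl⟩ := hw
  exact ⟨h * h₁, mul_mem hh hh₁, h₂, hh₂, by group⟩

theorem dcoset_inv_mem {s w : G} (hw : w ∈ dcoset H s) : w⁻¹ ∈ dcoset H s⁻¹ := by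
  obtain ⟨h₁, hh₁, h₂, hh₂, rfl⟩ := hw
  exact ⟨h₂⁻¹, inv_mem hh₂, h₁⁻¹, inv_mem hh₁, by group⟩

theorem dcoset_eq_of_mem {s x : G} (hx : x ∈ dcoset H s) : dcoset H x = dcoset H s := by
  obtain ⟨h₁, hh₁, h₂, hh₂, rfl⟩ := hx
  ext g
  constructor
  · rintro ⟨a, ha, b, hb, rfl⟩
    exact ⟨a * h₁, mul_mem ha hh₁, h₂ * b, mul_mem hh₂ hb, by group⟩
  · rintro ⟨a, ha, b, hb, rfl⟩
    exact ⟨a * h₁⁻¹, mul_mem ha (inv_mem hh₁), h₂⁻¹ * b, mul_mem (inv_mem hh₂) hb, by group⟩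

theorem dcoset_eq_of_inter {s t : G} (h : (dcoset H s ∩ dcoset H t).Nonempty) :
    dcoset H s = dcoset H t := by
  obtain ⟨x, hxs, hxt⟩ := h
  rw [← dcoset_eq_of_mem hxs, dcoset_eq_of_mem hxt]

theorem dcoset_subset {M : Subgroup G} (hHM : H ≤ M) {s : G} (hs : s ∈ M) :
    dcoset H s ⊆ (M : Set G) := by
  rintro x ⟨h₁, hh₁, h₂, hh₂, rfl⟩
  exact mul_mem (mul_mem (hHM hh₁) hs) (hHM hh₂)

theorem dcoset_disj {M : Subgroup G} (hHM : H ≤ M) {s : G} (hs : s ∉ M) :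
    dcoset H s ∩ (M : Set G) = ∅ := by
  ext x
  simp only [Set.mem_inter_iff, Set.mem_empty_iff_false, iff_false, not_and]
  rintro ⟨h₁, hh₁, h₂, hh₂, rfl⟩ hmem
  exact hs (by
    have : s = h₁⁻¹ * (h₁ * s * h₂) * h₂⁻¹ := by group
    rw [this]
    exact mul_mem (mul_mem (inv_mem (hHM hh₁)) hmem) (inv_mem (hHM hh₂)))

theorem dcoset_inv (H : Subgroup G) (s : G) : (dcoset H s)⁻¹ = dcoset H s⁻¹ := by
  ext x
  constructor
  · intro hx
    have := dcoset_inv_mem (Set.mem_inv.mp hx)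
    simpa using this
  · rintro ⟨h₁, hh₁, h₂, hh₂, rfl⟩
    rw [Set.mem_inv]
    exact ⟨h₂⁻¹, inv_mem hh₂, h₁⁻¹, inv_mem hh₁, by group⟩

theorem dcoset_inv_ncard (H : Subgroup G) (s : G) :
    (dcoset H s⁻¹).ncard = (dcoset H s).ncard := by
  rw [← dcoset_inv, Set.ncard_inv]

/-- Counting lemma: a right-`H`-invariant set has `|U| = |mk '' U| ⬝ |H|`. -/
theorem card_mk_image (H : Subgroup G) (U : Set G) (hU : ∀ u ∈ U, ∀ h ∈ H, u * h ∈ U) :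
    U.ncard = ((QuotientGroup.mk '' U : Set (G ⧸ H))).ncard * Nat.card H := by
  rw [← Nat.card_coe_set_eq, ← Nat.card_coe_set_eq, ← Nat.card_prod]
  apply Nat.card_congr
  have hout : ∀ y : G ⧸ H, y ∈ (QuotientGroup.mk '' U : Set (G ⧸ H)) →
      (Quotient.out y) ∈ U := by
    rintro y ⟨u, hu, rfl⟩
    have h1 : (QuotientGroup.mk (Quotient.out (QuotientGroup.mk u : G ⧸ H)) : G ⧸ H)
        = QuotientGroup.mk u := QuotientGroup.out_eq' _
    have h2 : u⁻¹ * Quotient.out (QuotientGroup.mk u : G ⧸ H) ∈ H :=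
      (QuotientGroup.eq).mp h1.symm
    have h3 : u * (u⁻¹ * Quotient.out (QuotientGroup.mk u : G ⧸ H)) ∈ U :=
      hU u hu _ h2
    simpa using h3
  refine ⟨fun u => ⟨⟨QuotientGroup.mk u.1, ⟨u.1, u.2, rfl⟩⟩,
      ⟨(Quotient.out (QuotientGroup.mk u.1 : G ⧸ H))⁻¹ * u.1,
        (QuotientGroup.eq).mp (QuotientGroup.out_eq' _)⟩⟩,
    fun p => ⟨(Quotient.out (p.1 : G ⧸ H)) * p.2, hU _ (hout _ p.1.2) _ p.2.2⟩, ?_, ?_⟩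
  · rintro ⟨u, hu⟩
    simp only [Subtype.mk.injEq]
    group
  · rintro ⟨⟨y, hy⟩, ⟨h, hh⟩⟩
    have hmk : (QuotientGroup.mk (Quotient.out y * h) : G ⧸ H) = y := by
      rw [QuotientGroup.mk_mul_of_mem _ hh, QuotientGroup.out_eq']
    simp only [Prod.mk.injEq, Subtype.mk.injEq]
    refine ⟨Subtype.ext hmk, ?_⟩
    have houteq : Quotient.out (QuotientGroup.mk (Quotient.out y * h) : G ⧸ H)
        = Quotient.out y := by rw [hmk]
    rw [houteq]
    group

end CosetCounting


section Tower
variable {G : Type*} [Group G] [Finite G] [DecidableEq G]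

theorem H_le_tower (H : Subgroup G) (s : ℕ → G) (i : ℕ) : H ≤ towerGroup1 H s i :=
  fun x hx => Subgroup.subset_closure (Or.inl hx)

theorem s_mem_tower (H : Subgroup G) (s : ℕ → G) {j i : ℕ} (h1 : 1 ≤ j) (hji : j ≤ i) :
    s j ∈ towerGroup1 H s i :=
  Subgroup.subset_closure (Or.inr (by
    simp only [Finset.coe_image, Set.mem_image, Finset.mem_coe, Finset.mem_Icc]
    exact ⟨j, ⟨h1, hji⟩, rfl⟩))

theorem tower_mono (H : Subgroup G) (s : ℕ → G) {i j : ℕ} (hij : i ≤ j) :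
    towerGroup1 H s i ≤ towerGroup1 H s j := by
  apply Subgroup.closure_mono
  apply Set.union_subset_union_right
  intro x hx
  simp only [Finset.coe_image, Set.mem_image, Finset.mem_coe, Finset.mem_Icc] at hx ⊢
  obtain ⟨a, ha, rfl⟩ := hx
  exact ⟨a, ⟨ha.1, ha.2.trans hij⟩, rfl⟩

theorem tower_le_of (H : Subgroup G) (s : ℕ → G) (i : ℕ) {M : Subgroup G} (hH : H ≤ M)
    (hs : ∀ j, 1 ≤ j → j ≤ i → s j ∈ M) : towerGroup1 H s i ≤ M := by
  apply (Subgroup.closure_le _).mpr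
  apply Set.union_subset hH
  intro x hx
  simp only [Finset.coe_image, Set.mem_image, Finset.mem_coe, Finset.mem_Icc] at hx
  obtain ⟨a, ha, rfl⟩ := hx
  exact hs a ha.1 ha.2

theorem tower_succ_eq (H : Subgroup G) (s : ℕ → G) (i : ℕ)
    (h : s (i + 1) ∈ towerGroup1 H s i) :
    towerGroup1 H s (i + 1) = towerGroup1 H s i := by
  refine le_antisymm ?_ (tower_mono H s (Nat.le_succ i))
  apply tower_le_of H s (i+1) (H_le_tower H s i)
  intro j h1 hj
  rcases Nat.lt_or_ge j (i+1) with hlt | hge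
  · exact s_mem_tower H s h1 (Nat.lt_succ_iff.mp hlt)
  · have : j = i + 1 := le_antisymm hj hge
    rw [this]; exact h

theorem tower_card_chain (H : Subgroup G) (s : ℕ → G) (k : ℕ)
    (hstrict : ∀ l, 1 ≤ l → l < k → towerGroup1 H s l ≠ towerGroup1 H s (l + 1)) :
    ∀ m, 1 ≤ m → m ≤ k →
      2 ^ (m - 1) * ((towerGroup1 H s 1 : Subgroup G) : Set G).ncard
        ≤ ((towerGroup1 H s m : Subgroup G) : Set G).ncard := by
  intro m hm1
  induction m, hm1 using Nat.le_induction with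
  | base => intro _; simp
  | succ m hm ih =>
    intro hmk
    have hmk' : m ≤ k := le_trans (Nat.le_succ m) hmk
    have hlt : towerGroup1 H s m < towerGroup1 H s (m + 1) :=
      lt_of_le_of_ne (tower_mono H s (Nat.le_succ m)) (hstrict m hm (Nat.lt_of_succ_le hmk))
    obtain ⟨x, hx1, hx2⟩ := SetLike.exists_of_lt hlt
    have hsub : ((towerGroup1 H s m : Subgroup G) : Set G)
        ∪ (fun g => x * g) '' ((towerGroup1 H s m : Subgroup G) : Set G)
        ⊆ ((towerGroup1 H s (m + 1) : Subgroup G) : Set G) := by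
      rintro y (hy | ⟨g, hg, rfl⟩)
      · exact hlt.le hy
      · exact mul_mem hx1 (hlt.le hg)
    have hdisj : Disjoint ((towerGroup1 H s m : Subgroup G) : Set G)
        ((fun g => x * g) '' ((towerGroup1 H s m : Subgroup G) : Set G)) := by
      rw [Set.disjoint_left]
      rintro y hy ⟨g, hg, rfl⟩
      exact hx2 (by
        have : x = (x * g) * g⁻¹ := by group
        rw [this]
        exact mul_mem hy (inv_mem hg))
    have himg : ((fun g => x * g) '' ((towerGroup1 H s m : Subgroup G) : Set G)).ncard
        = ((towerGroup1 H s m : Subgroup G) : Set G).ncard :=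
      Set.ncard_image_of_injective _ (mul_right_injective x)
    have hcard : 2 * ((towerGroup1 H s m : Subgroup G) : Set G).ncard
        ≤ ((towerGroup1 H s (m + 1) : Subgroup G) : Set G).ncard := by
      calc 2 * ((towerGroup1 H s m : Subgroup G) : Set G).ncard
          = ((towerGroup1 H s m : Subgroup G) : Set G).ncard
            + ((fun g => x * g) '' ((towerGroup1 H s m : Subgroup G) : Set G)).ncard := by
            rw [himg]; ring
        _ = (((towerGroup1 H s m : Subgroup G) : Set G)
            ∪ (fun g => x * g) '' ((towerGroup1 H s m : Subgroup G) : Set G)).ncard :=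
            (Set.ncard_union_eq hdisj (Set.toFinite _) (Set.toFinite _)).symm
        _ ≤ _ := Set.ncard_le_ncard hsub (Set.toFinite _)
    have hpow : 2 ^ (m + 1 - 1) = 2 * 2 ^ (m - 1) := by
      rw [Nat.add_sub_cancel]
      conv_lhs => rw [← Nat.sub_add_cancel hm]
      rw [pow_succ]
      ring
    calc 2 ^ (m + 1 - 1) * ((towerGroup1 H s 1 : Subgroup G) : Set G).ncard
        = 2 * (2 ^ (m - 1) * ((towerGroup1 H s 1 : Subgroup G) : Set G).ncard) := by
          rw [hpow]; ring
      _ ≤ 2 * ((towerGroup1 H s m : Subgroup G) : Set G).ncard := by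
          exact Nat.mul_le_mul_left 2 (ih hmk')
      _ ≤ _ := hcard

theorem g1_card (H : Subgroup G) (s : ℕ → G) (hs1 : s 1 ∉ H)
    (hinv : dcoset H ((s 1)⁻¹) ≠ dcoset H (s 1)) :
    (H : Set G).ncard + 2 * (dcoset H (s 1)).ncard
      ≤ ((towerGroup1 H s 1 : Subgroup G) : Set G).ncard := by
  have hHle := H_le_tower H s 1
  have hs1m : s 1 ∈ towerGroup1 H s 1 := s_mem_tower H s le_rfl le_rfl
  have hsub : (H : Set G) ∪ (dcoset H (s 1) ∪ dcoset H ((s 1)⁻¹))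
      ⊆ ((towerGroup1 H s 1 : Subgroup G) : Set G) := by
    rintro x (hx | hx | hx)
    · exact hHle hx
    · exact dcoset_subset hHle hs1m hx
    · exact dcoset_subset hHle (inv_mem hs1m) hx
  have hd1 : Disjoint (dcoset H (s 1)) (dcoset H ((s 1)⁻¹)) := by
    rw [Set.disjoint_iff_inter_eq_empty]
    by_contra h
    exact hinv (dcoset_eq_of_inter (Set.nonempty_iff_ne_empty.mpr h)).symm
  have hd2 : Disjoint (H : Set G) (dcoset H (s 1) ∪ dcoset H ((s 1)⁻¹)) := by
    rw [Set.disjoint_right]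
    rintro x (hx | hx) hxH
    · have h0 := dcoset_disj (M := H) (s := s 1) (le_refl H) hs1
      exact Set.eq_empty_iff_forall_notMem.mp h0 x ⟨hx, hxH⟩
    · have h0 := dcoset_disj (M := H) (s := (s 1)⁻¹) (le_refl H)
        (fun h => hs1 (by simpa using inv_mem h))
      exact Set.eq_empty_iff_forall_notMem.mp h0 x ⟨hx, hxH⟩
  calc (H : Set G).ncard + 2 * (dcoset H (s 1)).ncard
      = (H : Set G).ncard + ((dcoset H (s 1)).ncard + (dcoset H ((s 1)⁻¹)).ncard) := by
        rw [dcoset_inv_ncard]; ring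
    _ = ((H : Set G) ∪ (dcoset H (s 1) ∪ dcoset H ((s 1)⁻¹))).ncard := by
        rw [Set.ncard_union_eq hd2 (Set.toFinite _) (Set.toFinite _),
          Set.ncard_union_eq hd1 (Set.toFinite _) (Set.toFinite _)]
    _ ≤ _ := Set.ncard_le_ncard hsub (Set.toFinite _)

end Tower

section KeyLemma
variable {G : Type*} [Group G] [Finite G] [DecidableEq G]

def KtH (K H : Subgroup G) (t : G) : Set G := {g | ∃ x ∈ K, ∃ h ∈ H, g = x * t * h}

theorem dcoset_subset_KtH {K H : Subgroup G} (hHK : H ≤ K) (t : G) :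
    dcoset H t ⊆ KtH K H t := by
  rintro g ⟨h₁, hh₁, h₂, hh₂, rfl⟩
  exact ⟨h₁, hHK hh₁, h₂, hh₂, rfl⟩

theorem KtH_mono {K K' H : Subgroup G} (hKK : K ≤ K') (t : G) :
    KtH K H t ⊆ KtH K' H t := by
  rintro g ⟨x, hx, h, hh, rfl⟩
  exact ⟨x, hKK hx, h, hh, rfl⟩

theorem KtH_card {K H : Subgroup G} (t : G) : (K : Set G).ncard ≤ (KtH K H t).ncard := by
  have himg : (fun x => x * t) '' (K : Set G) ⊆ KtH K H t := by
    rintro g ⟨x, hx, rfl⟩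
    exact ⟨x, hx, 1, one_mem _, by group⟩
  calc (K : Set G).ncard = ((fun x => x * t) '' (K : Set G)).ncard :=
      (Set.ncard_image_of_injective _ (mul_left_injective t)).symm
    _ ≤ _ := Set.ncard_le_ncard himg (Set.toFinite _)

theorem KtH_subset {K H M : Subgroup G} (hK : K ≤ M) (hH : H ≤ M) {t : G} (ht : t ∈ M) :
    KtH K H t ⊆ (M : Set G) := by
  rintro g ⟨x, hx, h, hh, rfl⟩
  exact mul_mem (mul_mem (hK hx) ht) (hH hh)

theorem dsum_bound (H : Subgroup G) (s : ℕ → G) (k : ℕ)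
    (hdeg : ∀ i, 1 ≤ i → i < k →
      (dcoset H (s (i + 1))).ncard ≤ ∑ j ∈ Finset.Icc 1 i, (dcoset H (s j)).ncard) :
    ∀ m, 1 ≤ m → m ≤ k →
      (∑ j ∈ Finset.Icc 1 m, (dcoset H (s j)).ncard)
        ≤ 2 ^ (m - 1) * (dcoset H (s 1)).ncard := by
  intro m hm1
  induction m, hm1 using Nat.le_induction with
  | base => intro _; simp
  | succ m hm ih =>
    intro hmk
    have hsum : (∑ j ∈ Finset.Icc 1 (m + 1), (dcoset H (s j)).ncard)
        = (∑ j ∈ Finset.Icc 1 m, (dcoset H (s j)).ncard) + (dcoset H (s (m + 1))).ncard :=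
      Finset.sum_Icc_succ_top (by omega) _
    have hih := ih (by omega)
    have hd := hdeg m hm (by omega)
    have hpow : 2 ^ (m + 1 - 1) = 2 * 2 ^ (m - 1) := by
      rw [Nat.add_sub_cancel]
      conv_lhs => rw [← Nat.sub_add_cancel hm]
      rw [pow_succ]
      ring
    rw [hsum, hpow]
    have hexp : 2 * 2 ^ (m - 1) * (dcoset H (s 1)).ncard
        = 2 ^ (m - 1) * (dcoset H (s 1)).ncard + 2 ^ (m - 1) * (dcoset H (s 1)).ncard := by
      ring
    omega

theorem keyLemma (H : Subgroup G) (s t : ℕ → G)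
    (ht : ∀ j, 1 ≤ j → (t j = s j ∨ t j = (s j)⁻¹))
    (hs1 : s 1 ∉ H) (hinv : dcoset H ((s 1)⁻¹) ≠ dcoset H (s 1)) :
    ∀ k : ℕ, 1 ≤ k →
    (∀ l, 1 ≤ l → l < k → towerGroup1 H s l ≠ towerGroup1 H s (l + 1)) →
    (∀ i, 1 ≤ i → i < k →
      (dcoset H (s (i + 1))).ncard ≤ ∑ j ∈ Finset.Icc 1 i, (dcoset H (s j)).ncard) →
    ∀ K : Subgroup G, H ≤ K → (∃ j, 1 ≤ j ∧ j ≤ k ∧ s j ∉ K) →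
    (∑ i ∈ Finset.Icc 1 k, (dcoset H (s i)).ncard) ≤
      (⋃ j ∈ Finset.Icc 1 k, ⋃ (_ : s j ∉ K), KtH K H (t j)).ncard := by
  intro k hk1
  induction k, hk1 using Nat.le_induction with
  | base =>
    rintro _ _ K hHK ⟨j, hj1, hjk, hjK⟩
    have hj : j = 1 := le_antisymm hjk hj1
    subst hj
    have hsub : dcoset H (t 1) ⊆
        (⋃ j ∈ Finset.Icc 1 1, ⋃ (_ : s j ∉ K), KtH K H (t j)) := by
      intro g hg
      exact Set.mem_iUnion₂.mpr ⟨1, by simp, Set.mem_iUnion.mpr ⟨hjK,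
        dcoset_subset_KtH hHK (t 1) hg⟩⟩
    have hcard : (dcoset H (s 1)).ncard = (dcoset H (t 1)).ncard := by
      rcases ht 1 le_rfl with h | h
      · rw [h]
      · rw [h, dcoset_inv_ncard]
    simp only [Finset.Icc_self, Finset.sum_singleton]
    rw [hcard]
    exact Set.ncard_le_ncard hsub (Set.toFinite _)
  | succ n hn ih =>
    rintro hstrict hdeg K hHK ⟨j, hj1, hjk, hjK⟩
    set Gn := towerGroup1 H s n with hGnDef
    set W := (⋃ j ∈ Finset.Icc 1 (n + 1), ⋃ (_ : s j ∉ K), KtH K H (t j)) with hWdef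
    have hsnot : s (n + 1) ∉ Gn := by
      intro hmem
      exact hstrict n hn (Nat.lt_succ_self n) (tower_succ_eq H s n hmem).symm
    have htnot : t (n + 1) ∉ Gn := by
      rcases ht (n + 1) (by omega) with h | h
      · rw [h]; exact hsnot
      · rw [h]; intro hmem; exact hsnot (by simpa using inv_mem hmem)
    have hdegn := hdeg n hn (Nat.lt_succ_self n)
    have hstrict' : ∀ l, 1 ≤ l → l < n → towerGroup1 H s l ≠ towerGroup1 H s (l + 1) :=
      fun l h1 h2 => hstrict l h1 (by omega)
    have hdeg' : ∀ i, 1 ≤ i → i < n →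
        (dcoset H (s (i + 1))).ncard ≤ ∑ j ∈ Finset.Icc 1 i, (dcoset H (s j)).ncard :=
      fun i h1 h2 => hdeg i h1 (by omega)
    have hsum : (∑ i ∈ Finset.Icc 1 (n + 1), (dcoset H (s i)).ncard)
        = (∑ i ∈ Finset.Icc 1 n, (dcoset H (s i)).ncard) + (dcoset H (s (n + 1))).ncard :=
      Finset.sum_Icc_succ_top (by omega) _
    -- the "recursive" setup, used when some j ≤ n has s j ∉ K
    have recur : (∃ j, 1 ≤ j ∧ j ≤ n ∧ s j ∉ K) →
        (∑ i ∈ Finset.Icc 1 n, (dcoset H (s i)).ncard) ≤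
        ((⋃ j ∈ Finset.Icc 1 n, ⋃ (_ : s j ∉ K ⊓ Gn), KtH (K ⊓ Gn) H (t j))).ncard ∧
        (⋃ j ∈ Finset.Icc 1 n, ⋃ (_ : s j ∉ K ⊓ Gn), KtH (K ⊓ Gn) H (t j)) ⊆ (Gn : Set G) ∧
        (⋃ j ∈ Finset.Icc 1 n, ⋃ (_ : s j ∉ K ⊓ Gn), KtH (K ⊓ Gn) H (t j)) ⊆ W := by
      rintro ⟨j', hj'1, hj'n, hj'K⟩
      have hHK' : H ≤ K ⊓ Gn := le_inf hHK (H_le_tower H s n)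
      refine ⟨ih hstrict' hdeg' (K ⊓ Gn) hHK'
        ⟨j', hj'1, hj'n, fun h => hj'K ((inf_le_left : K ⊓ Gn ≤ K) h)⟩, ?_, ?_⟩
      · intro g hg
        obtain ⟨i, hiIcc, hg2⟩ := Set.mem_iUnion₂.mp hg
        obtain ⟨hcond, hgK⟩ := Set.mem_iUnion.mp hg2
        have hi1 : 1 ≤ i := (Finset.mem_Icc.mp hiIcc).1
        have hin : i ≤ n := (Finset.mem_Icc.mp hiIcc).2
        have htiGn : t i ∈ Gn := by
          rcases ht i hi1 with h | h
          · rw [h]; exact s_mem_tower H s hi1 hin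
          · rw [h]; exact inv_mem (s_mem_tower H s hi1 hin)
        exact KtH_subset inf_le_right (H_le_tower H s n) htiGn hgK
      · intro g hg
        obtain ⟨i, hiIcc, hg2⟩ := Set.mem_iUnion₂.mp hg
        obtain ⟨hcond, hgK⟩ := Set.mem_iUnion.mp hg2
        have hi1 : 1 ≤ i := (Finset.mem_Icc.mp hiIcc).1
        have hin : i ≤ n := (Finset.mem_Icc.mp hiIcc).2
        have hsiK : s i ∉ K := by
          intro hmem
          exact hcond ⟨hmem, s_mem_tower H s hi1 hin⟩
        exact Set.mem_iUnion₂.mpr ⟨i, Finset.mem_Icc.mpr ⟨hi1, by omega⟩,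
          Set.mem_iUnion.mpr ⟨hsiK, KtH_mono inf_le_left (t i) hgK⟩⟩
    by_cases hsK : s (n + 1) ∈ K
    · -- Case A : the top generator is in K; double the inner union
      have hjn : j ≤ n := by
        rcases Nat.lt_or_ge j (n + 1) with h | h
        · omega
        · exact absurd (le_antisymm hjk h ▸ hsK) hjK
      obtain ⟨hIH, hWGn, hWW⟩ := recur ⟨j, hj1, hjn, hjK⟩
      set W' := (⋃ j ∈ Finset.Icc 1 n, ⋃ (_ : s j ∉ K ⊓ Gn), KtH (K ⊓ Gn) H (t j)) with hW'def
      have himgW : (fun g => s (n + 1) * g) '' W' ⊆ W := by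
        rintro _ ⟨g, hg, rfl⟩
        obtain ⟨i, hiIcc, hg2⟩ := Set.mem_iUnion₂.mp hg
        obtain ⟨hcond, hgK⟩ := Set.mem_iUnion.mp hg2
        have hi1 : 1 ≤ i := (Finset.mem_Icc.mp hiIcc).1
        have hin : i ≤ n := (Finset.mem_Icc.mp hiIcc).2
        have hsiK : s i ∉ K := fun hmem => hcond ⟨hmem, s_mem_tower H s hi1 hin⟩
        obtain ⟨x, hx, h, hh, rfl⟩ := hgK
        refine Set.mem_iUnion₂.mpr ⟨i, Finset.mem_Icc.mpr ⟨hi1, by omega⟩,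
          Set.mem_iUnion.mpr ⟨hsiK, ⟨s (n + 1) * x, mul_mem hsK ((inf_le_left : K ⊓ Gn ≤ K) hx),
            h, hh, by group⟩⟩⟩
      have hdisj : Disjoint W' ((fun g => s (n + 1) * g) '' W') := by
        rw [Set.disjoint_left]
        rintro y hy ⟨g, hg, rfl⟩
        have h1 : (s (n + 1) * g : G) ∈ Gn := hWGn hy
        have h2 : g ∈ Gn := hWGn hg
        exact hsnot (by
          have : s (n + 1) = (s (n + 1) * g) * g⁻¹ := by group
          rw [this]
          exact mul_mem h1 (inv_mem h2))
      have himgcard : ((fun g => s (n + 1) * g) '' W').ncard = W'.ncard :=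
        Set.ncard_image_of_injective _ (mul_right_injective _)
      have hun : (W' ∪ (fun g => s (n + 1) * g) '' W').ncard ≤ W.ncard :=
        Set.ncard_le_ncard (Set.union_subset hWW himgW) (Set.toFinite _)
      rw [Set.ncard_union_eq hdisj (Set.toFinite _) (Set.toFinite _), himgcard] at hun
      omega
    · -- Case B: s (n+1) ∉ K
      have hKtH_W : KtH K H (t (n + 1)) ⊆ W := by
        intro g hg
        exact Set.mem_iUnion₂.mpr ⟨n + 1, Finset.mem_Icc.mpr ⟨by omega, le_rfl⟩,
          Set.mem_iUnion.mpr ⟨hsK, hg⟩⟩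
      by_cases hex : ∃ j, 1 ≤ j ∧ j ≤ n ∧ s j ∉ K
      · -- Case B1
        obtain ⟨hIH, hWGn, hWW⟩ := recur hex
        set W' := (⋃ j ∈ Finset.Icc 1 n, ⋃ (_ : s j ∉ K ⊓ Gn), KtH (K ⊓ Gn) H (t j)) with hW'def
        have hdcW : dcoset H (t (n + 1)) ⊆ W :=
          subset_trans (dcoset_subset_KtH hHK _) hKtH_W
        have hdisj : Disjoint W' (dcoset H (t (n + 1))) := by
          rw [Set.disjoint_left]
          intro y hy hyd
          have h0 := dcoset_disj (M := Gn) (s := t (n + 1)) (H_le_tower H s n) htnot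
          exact Set.eq_empty_iff_forall_notMem.mp h0 y ⟨hyd, hWGn hy⟩
        have hdq : (dcoset H (t (n + 1))).ncard = (dcoset H (s (n + 1))).ncard := by
          rcases ht (n + 1) (by omega) with h | h
          · rw [h]
          · rw [h, dcoset_inv_ncard]
        have hun : (W' ∪ dcoset H (t (n + 1))).ncard ≤ W.ncard :=
          Set.ncard_le_ncard (Set.union_subset hWW hdcW) (Set.toFinite _)
        rw [Set.ncard_union_eq hdisj (Set.toFinite _) (Set.toFinite _), hdq] at hun
        omega
      · -- Case B2 : all of s 1, ..., s n lie in K, so Gn ≤ K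
        have hall : ∀ i, 1 ≤ i → i ≤ n → s i ∈ K := by
          intro i h1 h2
          by_contra hcon
          exact hex ⟨i, h1, h2, hcon⟩
        have hGnK : Gn ≤ K := tower_le_of H s n hHK hall
        have hchain := tower_card_chain H s (n + 1) hstrict n hn (by omega)
        have hg1 := g1_card H s hs1 hinv
        have hDn := dsum_bound H s (n + 1) hdeg n hn (by omega)
        have hHpos : 1 ≤ (H : Set G).ncard :=
          (Set.ncard_pos (Set.toFinite _)).mpr ⟨1, one_mem H⟩
        have hKcard : (Gn : Set G).ncard ≤ (K : Set G).ncard :=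
          Set.ncard_le_ncard hGnK (Set.toFinite _)
        have hWcard : (KtH K H (t (n + 1))).ncard ≤ W.ncard :=
          Set.ncard_le_ncard hKtH_W (Set.toFinite _)
        have hKW := KtH_card (K := K) (H := H) (t (n + 1))
        have hpow : 2 ^ n = 2 * 2 ^ (n - 1) := by
          conv_lhs => rw [← Nat.sub_add_cancel hn]
          rw [pow_succ]
          ring
        have hfin : (∑ i ∈ Finset.Icc 1 n, (dcoset H (s i)).ncard)
            + (dcoset H (s (n + 1))).ncard
            ≤ 2 ^ (n - 1) * ((towerGroup1 H s 1 : Subgroup G) : Set G).ncard := by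
          calc (∑ i ∈ Finset.Icc 1 n, (dcoset H (s i)).ncard)
              + (dcoset H (s (n + 1))).ncard
              ≤ 2 * (∑ i ∈ Finset.Icc 1 n, (dcoset H (s i)).ncard) := by omega
            _ ≤ 2 * (2 ^ (n - 1) * (dcoset H (s 1)).ncard) :=
              Nat.mul_le_mul_left 2 hDn
            _ ≤ 2 ^ (n - 1) * ((H : Set G).ncard + 2 * (dcoset H (s 1)).ncard) := by
              ring_nf
              nlinarith [hHpos, pow_pos (by norm_num : 0 < 2) (n - 1)]
            _ ≤ 2 ^ (n - 1) * ((towerGroup1 H s 1 : Subgroup G) : Set G).ncard :=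
              Nat.mul_le_mul_left _ hg1
        rw [hsum]
        calc (∑ i ∈ Finset.Icc 1 n, (dcoset H (s i)).ncard) + (dcoset H (s (n + 1))).ncard
            ≤ 2 ^ (n - 1) * ((towerGroup1 H s 1 : Subgroup G) : Set G).ncard := hfin
          _ ≤ (Gn : Set G).ncard := hchain
          _ ≤ (K : Set G).ncard := hKcard
          _ ≤ (KtH K H (t (n + 1))).ncard := hKW
          _ ≤ W.ncard := hWcard

end KeyLemma

section Glue
variable {G : Type*} [Group G] [Finite G] [DecidableEq G]

theorem ncard_biUnion_eq {α : Type*} [Finite α] (F : Finset ℕ) (f : ℕ → Set α)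
    (hdisj : ∀ i ∈ F, ∀ j ∈ F, i ≠ j → Disjoint (f i) (f j)) :
    (⋃ i ∈ F, f i).ncard = ∑ i ∈ F, (f i).ncard := by
  classical
  induction F using Finset.induction_on with
  | empty => simp
  | @insert a F' ha ih =>
    rw [Finset.set_biUnion_insert, Finset.sum_insert ha]
    have hd : Disjoint (f a) (⋃ i ∈ F', f i) := by
      rw [Set.disjoint_left]
      intro x hx hx'
      obtain ⟨i, hi, hxi⟩ := Set.mem_iUnion₂.mp hx'
      have hne : a ≠ i := fun h => ha (h ▸ hi)
      exact Set.disjoint_left.mp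
        (hdisj a (Finset.mem_insert_self a F') i (Finset.mem_insert_of_mem hi) hne) hx hxi
    rw [Set.ncard_union_eq hd (Set.toFinite _) (Set.toFinite _),
      ih (fun i hi j hj hij =>
        hdisj i (Finset.mem_insert_of_mem hi) j (Finset.mem_insert_of_mem hj) hij)]

theorem rtg_flip {V : Type*} {E : V → V → Prop} {a b : V}
    (h : Relation.ReflTransGen E a b) : Relation.ReflTransGen (flipR E) b a := by
  induction h with
  | refl => exact .refl
  | tail _ h ih => exact Relation.ReflTransGen.head h ih

theorem noescape {V : Type*} {E : V → V → Prop} {A : Set V}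
    (hN : Nout E A = ∅) {a b : V} (h : Relation.ReflTransGen E a b) (ha : a ∈ A) :
    b ∈ A := by
  induction h with
  | refl => exact ha
  | @tail p q _ h ih =>
    by_contra hq
    exact absurd (hN ▸ (⟨hq, p, ih, h⟩ : q ∈ Nout E A)) (Set.notMem_empty q)

variable (H : Subgroup G) (k : ℕ) (s : ℕ → G)

theorem edge_iff (u : G) (z : G ⧸ H) :
    cayleyRel H (((Finset.Icc 1 k).image s : Finset G) : Set G) (u : G ⧸ H) z ↔
      ∃ j, (1 ≤ j ∧ j ≤ k) ∧ ∃ w ∈ dcoset H (s j), z = ((u * w : G) : G ⧸ H) := by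
  constructor
  · rintro ⟨σ, hσ, g₁, g₂, h1, h2, hw⟩
    obtain ⟨j, hj, rfl⟩ : ∃ j, (1 ≤ j ∧ j ≤ k) ∧ s j = σ := by
      simpa [Finset.mem_coe, Finset.mem_image, Finset.mem_Icc] using hσ
    have hh0 : g₁⁻¹ * u ∈ H := QuotientGroup.eq.mp h1
    have hele : u⁻¹ * g₂ ∈ dcoset H (s j) := by
      have h3 := dcoset_mul_left hw (inv_mem hh0)
      have heq : (g₁⁻¹ * u)⁻¹ * (g₁⁻¹ * g₂) = u⁻¹ * g₂ := by group
      rwa [heq] at h3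
    refine ⟨j, hj, u⁻¹ * g₂, hele, ?_⟩
    rw [← h2]
    congr 1
    group
  · rintro ⟨j, hj, w, hw, rfl⟩
    refine ⟨s j, ?_, u, u * w, rfl, rfl, ?_⟩
    · simp only [Finset.coe_image, Set.mem_image, Finset.mem_coe, Finset.mem_Icc]
      exact ⟨j, hj, rfl⟩
    · have heq : u⁻¹ * (u * w) = w := by group
      rw [heq]
      exact hw

theorem edge_flip_iff (u : G) (z : G ⧸ H) :
    flipR (cayleyRel H (((Finset.Icc 1 k).image s : Finset G) : Set G)) (u : G ⧸ H) z ↔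
      ∃ j, (1 ≤ j ∧ j ≤ k) ∧ ∃ w ∈ dcoset H ((s j)⁻¹), z = ((u * w : G) : G ⧸ H) := by
  obtain ⟨v, rfl⟩ := QuotientGroup.mk_surjective z
  show cayleyRel H _ (v : G ⧸ H) (u : G ⧸ H) ↔ _
  rw [edge_iff H k s]
  constructor
  · rintro ⟨j, hj, w, hw, hz⟩
    refine ⟨j, hj, u⁻¹ * v, ?_, by congr 1; group⟩
    have h1 : u⁻¹ * (v * w) ∈ H := QuotientGroup.eq.mp hz
    have h2 : w⁻¹ ∈ dcoset H ((s j)⁻¹) := dcoset_inv_mem hw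
    have h3 := dcoset_mul_left h2 h1
    have heq : (u⁻¹ * (v * w)) * w⁻¹ = u⁻¹ * v := by group
    rwa [heq] at h3
  · rintro ⟨j, hj, w, hw, hz⟩
    refine ⟨j, hj, v⁻¹ * u, ?_, by congr 1; group⟩
    have h1 : (u * w)⁻¹ * v ∈ H := QuotientGroup.eq.mp hz.symm
    have h2 : w * ((u * w)⁻¹ * v) ∈ dcoset H ((s j)⁻¹) := dcoset_mul_right hw h1
    have h3 := dcoset_inv_mem h2
    have heq : (w * ((u * w)⁻¹ * v))⁻¹ = v⁻¹ * u := by group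
    rw [heq, inv_inv] at h3
    exact h3

theorem edge_smul (S : Set G) (g : G) (x y : G ⧸ H) :
    cayleyRel H S (g • x) (g • y) ↔ cayleyRel H S x y := by
  constructor
  · rintro ⟨σ, hσ, g₁, g₂, h1, h2, hw⟩
    refine ⟨σ, hσ, g⁻¹ * g₁, g⁻¹ * g₂, ?_, ?_, ?_⟩
    · have hmk : ((g⁻¹ * g₁ : G) : G ⧸ H) = g⁻¹ • ((g₁ : G) : G ⧸ H) :=
        (MulAction.Quotient.smul_mk H g⁻¹ g₁).symm
      rw [hmk, h1, inv_smul_smul]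
    · have hmk : ((g⁻¹ * g₂ : G) : G ⧸ H) = g⁻¹ • ((g₂ : G) : G ⧸ H) :=
        (MulAction.Quotient.smul_mk H g⁻¹ g₂).symm
      rw [hmk, h2, inv_smul_smul]
    · have heq : (g⁻¹ * g₁)⁻¹ * (g⁻¹ * g₂) = g₁⁻¹ * g₂ := by group
      rw [heq]
      exact hw
  · rintro ⟨σ, hσ, g₁, g₂, h1, h2, hw⟩
    refine ⟨σ, hσ, g * g₁, g * g₂, ?_, ?_, ?_⟩
    · have hmk : ((g * g₁ : G) : G ⧸ H) = g • ((g₁ : G) : G ⧸ H) :=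
        (MulAction.Quotient.smul_mk H g g₁).symm
      rw [hmk, h1]
    · have hmk : ((g * g₂ : G) : G ⧸ H) = g • ((g₂ : G) : G ⧸ H) :=
        (MulAction.Quotient.smul_mk H g g₂).symm
      rw [hmk, h2]
    · have heq : (g * g₁)⁻¹ * (g * g₂) = g₁⁻¹ * g₂ := by group
      rw [heq]
      exact hw

end Glue

section Glue2
variable {G : Type*} [Group G] [Finite G] [DecidableEq G]

theorem nout_singleton_card (H : Subgroup G) (k : ℕ) (s : ℕ → G)
    (hSH : ∀ i, 1 ≤ i → i ≤ k → s i ∉ H)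
    (hdc : ∀ i, 1 ≤ i → i ≤ k → ∀ j, 1 ≤ j → j ≤ k → i ≠ j →
      dcoset H (s i) ≠ dcoset H (s j)) (u : G) :
    (Nout (cayleyRel H (((Finset.Icc 1 k).image s : Finset G) : Set G))
      {((u : G) : G ⧸ H)}).ncard = ∑ i ∈ Finset.Icc 1 k, dval H (s i) := by
  have hset : Nout (cayleyRel H (((Finset.Icc 1 k).image s : Finset G) : Set G))
      {((u : G) : G ⧸ H)}
      = ⋃ j ∈ Finset.Icc 1 k, (QuotientGroup.mk '' ((fun w => u * w) '' dcoset H (s j))) := by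
    ext z
    constructor
    · rintro ⟨hne, y, hy, he⟩
      rw [Set.mem_singleton_iff] at hy
      subst hy
      obtain ⟨j, hj, w, hw, rfl⟩ := (edge_iff H k s u z).mp he
      exact Set.mem_iUnion₂.mpr ⟨j, Finset.mem_Icc.mpr hj, ⟨u * w, ⟨w, hw, rfl⟩, rfl⟩⟩
    · intro hz
      obtain ⟨j, hjIcc, hmem⟩ := Set.mem_iUnion₂.mp hz
      obtain ⟨_, ⟨w, hw, rfl⟩, rfl⟩ := hmem
      have hj := Finset.mem_Icc.mp hjIcc
      refine ⟨?_, ((u : G) : G ⧸ H), rfl,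
        (edge_iff H k s u _).mpr ⟨j, hj, w, hw, rfl⟩⟩
      rw [Set.mem_singleton_iff]
      intro heq
      have hH : (u * w)⁻¹ * u ∈ H := QuotientGroup.eq.mp heq
      have hwH : w ∈ H := by
        have heq2 : ((u * w)⁻¹ * u)⁻¹ = w := by group
        have := inv_mem hH
        rwa [heq2] at this
      have h0 := dcoset_disj (M := H) (s := s j) (le_refl H) (hSH j hj.1 hj.2)
      exact Set.eq_empty_iff_forall_notMem.mp h0 w ⟨hw, hwH⟩
  rw [hset, ncard_biUnion_eq]
  · apply Finset.sum_congr rfl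
    intro j _
    have himg : QuotientGroup.mk '' ((fun w => u * w) '' dcoset H (s j))
        = (fun z => u • z) '' (QuotientGroup.mk '' dcoset H (s j) : Set (G ⧸ H)) := by
      rw [← Set.image_comp, ← Set.image_comp]
      apply Set.image_congr
      intro w _
      show ((u * w : G) : G ⧸ H) = u • ((w : G) : G ⧸ H)
      rw [MulAction.Quotient.smul_mk]
      rfl
    rw [himg, Set.ncard_image_of_injective _ (MulAction.injective u)]
    rfl
  · intro i hi j hj hij
    rw [Set.disjoint_left]
    rintro z ⟨_, ⟨w, hw, rfl⟩, rfl⟩ hz2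
    obtain ⟨_, ⟨w', hw', rfl⟩, heq⟩ := hz2
    have hH : (u * w')⁻¹ * (u * w) ∈ H := QuotientGroup.eq.mp heq
    have heq2 : (u * w')⁻¹ * (u * w) = w'⁻¹ * w := by group
    rw [heq2] at hH
    have hwin : w ∈ dcoset H (s j) := by
      have h3 := dcoset_mul_right hw' hH
      have heq3 : w' * (w'⁻¹ * w) = w := by group
      rwa [heq3] at h3
    have hi' := Finset.mem_Icc.mp hi
    have hj' := Finset.mem_Icc.mp hj
    exact (hdc i hi'.1 hi'.2 j hj'.1 hj'.2 hij) (dcoset_eq_of_inter ⟨w, hw, hwin⟩)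

theorem nout_mkK (H : Subgroup G) (k : ℕ) (s t : ℕ → G)
    (E' : (G ⧸ H) → (G ⧸ H) → Prop)
    (hedge : ∀ (u : G) (z : G ⧸ H), E' (u : G ⧸ H) z ↔
      ∃ j, (1 ≤ j ∧ j ≤ k) ∧ ∃ w ∈ dcoset H (t j), z = ((u * w : G) : G ⧸ H))
    (hts : ∀ j, 1 ≤ j → j ≤ k → ∀ M : Subgroup G, (t j ∈ M ↔ s j ∈ M))
    (K : Subgroup G) (hHK : H ≤ K) :
    Nout E' (QuotientGroup.mk '' (K : Set G)) =
      QuotientGroup.mk '' (⋃ j ∈ Finset.Icc 1 k, ⋃ (_ : s j ∉ K), KtH K H (t j)) := by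
  ext z
  constructor
  · rintro ⟨hz, y, ⟨u, hu, rfl⟩, he⟩
    obtain ⟨j, hj, w, hw, rfl⟩ := (hedge u _).mp he
    by_cases hsj : s j ∈ K
    · exfalso
      have htj : t j ∈ K := (hts j hj.1 hj.2 K).mpr hsj
      exact hz ⟨u * w, mul_mem hu (dcoset_subset hHK htj hw), rfl⟩
    · obtain ⟨h₁, hh₁, h₂, hh₂, rfl⟩ := hw
      refine ⟨u * (h₁ * t j * h₂), ?_, rfl⟩
      exact Set.mem_iUnion₂.mpr ⟨j, Finset.mem_Icc.mpr hj, Set.mem_iUnion.mpr ⟨hsj,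
        ⟨u * h₁, mul_mem hu (hHK hh₁), h₂, hh₂, by group⟩⟩⟩
  · rintro ⟨g, hg, rfl⟩
    obtain ⟨j, hjIcc, hg2⟩ := Set.mem_iUnion₂.mp hg
    obtain ⟨hsj, x, hx, h, hh, rfl⟩ := Set.mem_iUnion.mp hg2
    have hj := Finset.mem_Icc.mp hjIcc
    constructor
    · rintro ⟨u, hu, heq⟩
      have hmem : u⁻¹ * (x * t j * h) ∈ H := QuotientGroup.eq.mp heq
      have hK1 : x * t j * h ∈ K := by
        have h2 : u * (u⁻¹ * (x * t j * h)) ∈ K := mul_mem hu (hHK hmem)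
        have heq2 : u * (u⁻¹ * (x * t j * h)) = x * t j * h := by group
        rwa [heq2] at h2
      have htjK : t j ∈ K := by
        have heq3 : t j = x⁻¹ * (x * t j * h) * h⁻¹ := by group
        rw [heq3]
        exact mul_mem (mul_mem (inv_mem hx) hK1) (inv_mem (hHK hh))
      exact hsj ((hts j hj.1 hj.2 K).mp htjK)
    · refine ⟨((x : G) : G ⧸ H), ⟨x, hx, rfl⟩, (hedge x _).mpr ⟨j, hj,
        t j * h, ⟨1, one_mem _, h, hh, by group⟩, by rw [mul_assoc]⟩⟩

end Glue2

section LowerCore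
variable {G : Type*} [Group G] [Finite G] [DecidableEq G]

theorem lower_core (H : Subgroup G) (k : ℕ) (hk1 : 1 ≤ k) (s t : ℕ → G)
    (hSH : ∀ i, 1 ≤ i → i ≤ k → s i ∉ H)
    (hinv : dcoset H ((s 1)⁻¹) ≠ dcoset H (s 1))
    (hstrict : ∀ l, 1 ≤ l → l < k → towerGroup1 H s l ≠ towerGroup1 H s (l + 1))
    (hdegset : ∀ i, 1 ≤ i → i < k →
      (dcoset H (s (i + 1))).ncard ≤ ∑ j ∈ Finset.Icc 1 i, (dcoset H (s j)).ncard)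
    (ht : ∀ j, 1 ≤ j → (t j = s j ∨ t j = (s j)⁻¹))
    (E' : (G ⧸ H) → (G ⧸ H) → Prop)
    (hedge : ∀ (u : G) (z : G ⧸ H), E' (u : G ⧸ H) z ↔
      ∃ j, (1 ≤ j ∧ j ≤ k) ∧ ∃ w ∈ dcoset H (t j), z = ((u * w : G) : G ⧸ H))
    (hequiv : ∀ (g : G) (x y : G ⧸ H), E' (g • x) (g • y) ↔ E' x y)
    (hSC' : ∀ a b : G ⧸ H, Relation.ReflTransGen E' a b)
    (hguard : ∃ T : Set (G ⧸ H), ¬ SCOn E' Tᶜ)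
    (hflipmin : ∀ F, IsFrag (flipR E') F → atomN E' ≤ F.ncard) :
    (∑ i ∈ Finset.Icc 1 k, dval H (s i)) ≤ kappa E' := by
  obtain ⟨A1, hA1⟩ := exists_atomMy hguard
  obtain ⟨x0, hx0⟩ := hA1.1.1.1
  obtain ⟨g0, rfl⟩ := QuotientGroup.mk_surjective x0
  have hperm : ∀ g : G, ∀ x y : G ⧸ H,
      E' ((MulAction.toPerm g : Equiv.Perm (G ⧸ H)) x)
        ((MulAction.toPerm g : Equiv.Perm (G ⧸ H)) y) ↔ E' x y :=
    fun g x y => hequiv g x y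
  set A0 : Set (G ⧸ H) := (MulAction.toPerm (g0⁻¹) : Equiv.Perm (G ⧸ H)) '' A1 with hA0def
  have hA0atom : IsAtomMy E' A0 := atomMy_image _ (hperm g0⁻¹) hA1
  have h1A : ((1 : G) : G ⧸ H) ∈ A0 := by
    refine ⟨((g0 : G) : G ⧸ H), hx0, ?_⟩
    show g0⁻¹ • ((g0 : G) : G ⧸ H) = ((1 : G) : G ⧸ H)
    rw [MulAction.Quotient.smul_mk]
    congr 1
    show g0⁻¹ * g0 = 1
    group
  have hstab : ∀ g : G, (g : G ⧸ H) ∈ A0 →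
      (MulAction.toPerm g : Equiv.Perm (G ⧸ H)) '' A0 = A0 := by
    intro g hg
    refine atom_eq_of_inter hflipmin (atomMy_image _ (hperm g) hA0atom) hA0atom
      ⟨(g : G ⧸ H), ?_, hg⟩
    refine ⟨((1 : G) : G ⧸ H), h1A, ?_⟩
    show g • ((1 : G) : G ⧸ H) = ((g : G) : G ⧸ H)
    rw [MulAction.Quotient.smul_mk]
    congr 1
    show g * 1 = g
    group
  set Kc : Subgroup G :=
    { carrier := {g : G | (g : G ⧸ H) ∈ A0}
      one_mem' := h1A
      mul_mem' := by
        intro a b ha hb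
        have hrw := hstab a ha
        show ((a * b : G) : G ⧸ H) ∈ A0
        rw [← hrw]
        refine ⟨((b : G) : G ⧸ H), hb, ?_⟩
        show a • ((b : G) : G ⧸ H) = ((a * b : G) : G ⧸ H)
        rw [MulAction.Quotient.smul_mk]
        rfl
      inv_mem' := by
        intro a ha
        have h1A' : ((1 : G) : G ⧸ H) ∈ (MulAction.toPerm a : Equiv.Perm (G ⧸ H)) '' A0 := by
          rw [hstab a ha]
          exact h1A
        obtain ⟨y, hy, hay⟩ := h1A'
        have hay' : a • y = ((1 : G) : G ⧸ H) := hay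
        have hyv : y = ((a⁻¹ : G) : G ⧸ H) := by
          have h2 : y = a⁻¹ • ((1 : G) : G ⧸ H) := by
            rw [← hay', inv_smul_smul]
          rw [h2, MulAction.Quotient.smul_mk]
          congr 1
          show a⁻¹ * 1 = a⁻¹
          group
        show ((a⁻¹ : G) : G ⧸ H) ∈ A0
        rw [← hyv]
        exact hy } with hKdef
  have hHK : H ≤ Kc := by
    intro h hh
    show ((h : G) : G ⧸ H) ∈ A0
    have heq : ((h : G) : G ⧸ H) = ((1 : G) : G ⧸ H) :=
      QuotientGroup.eq.mpr (by simpa using inv_mem hh)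
    rw [heq]
    exact h1A
  have hA0K : A0 = QuotientGroup.mk '' (Kc : Set G) := by
    ext z
    constructor
    · intro hz
      obtain ⟨g, rfl⟩ := QuotientGroup.mk_surjective z
      exact ⟨g, hz, rfl⟩
    · rintro ⟨g, hg, rfl⟩
      exact hg
  have hts : ∀ j, 1 ≤ j → j ≤ k → ∀ M : Subgroup G, (t j ∈ M ↔ s j ∈ M) := by
    intro j hj1 _ M
    rcases ht j hj1 with h | h
    · rw [h]
    · rw [h]
      exact inv_mem_iff
  set Wu : Set G := ⋃ j ∈ Finset.Icc 1 k, ⋃ (_ : s j ∉ Kc), KtH Kc H (t j) with hWudef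
  have hbd : Nout E' A0 = QuotientGroup.mk '' Wu := by
    rw [hA0K]
    exact nout_mkK H k s t E' hedge hts Kc hHK
  have hJ : ∃ j, 1 ≤ j ∧ j ≤ k ∧ s j ∉ Kc := by
    by_contra hcon
    push_neg at hcon
    have hWempty : Wu = ∅ := by
      ext g
      simp only [hWudef, Set.mem_iUnion, Set.mem_empty_iff_false, iff_false, not_exists]
      rintro j hjIcc hsj _
      have hj := Finset.mem_Icc.mp hjIcc
      exact hsj (hcon j hj.1 hj.2)
    have hNempty : Nout E' A0 = ∅ := by
      rw [hbd, hWempty, Set.image_empty]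
    obtain ⟨zc, hzc⟩ := hA0atom.1.1.2
    exact hzc (Or.inl (noescape hNempty (hSC' ((1 : G) : G ⧸ H) zc) h1A))
  have hkey := keyLemma H s t ht (hSH 1 le_rfl hk1) hinv k hk1 hstrict hdegset Kc hHK hJ
  have hWinv : ∀ u ∈ Wu, ∀ h ∈ H, u * h ∈ Wu := by
    intro u hu h hh
    obtain ⟨j, hjIcc, hu2⟩ := Set.mem_iUnion₂.mp hu
    obtain ⟨hcond, x, hx, h₀, hh₀, rfl⟩ := Set.mem_iUnion.mp hu2
    exact Set.mem_iUnion₂.mpr ⟨j, hjIcc, Set.mem_iUnion.mpr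
      ⟨hcond, ⟨x, hx, h₀ * h, mul_mem hh₀ hh, by group⟩⟩⟩
  have hWcard := card_mk_image H Wu hWinv
  have hsumcard : (∑ i ∈ Finset.Icc 1 k, (dcoset H (s i)).ncard)
      = (∑ i ∈ Finset.Icc 1 k, dval H (s i)) * Nat.card H := by
    rw [Finset.sum_mul]
    apply Finset.sum_congr rfl
    intro i _
    exact card_mk_image H (dcoset H (s i)) (fun u hu h hh => dcoset_mul_right hu hh)
  have hkap : kappa E' = (QuotientGroup.mk '' Wu : Set (G ⧸ H)).ncard := by
    rw [← hbd]
    exact hA0atom.1.2.symm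
  have hfinal : (∑ i ∈ Finset.Icc 1 k, dval H (s i)) * Nat.card H
      ≤ (QuotientGroup.mk '' Wu : Set (G ⧸ H)).ncard * Nat.card H := by
    rw [← hsumcard, ← hWcard]
    exact hkey
  have hHpos : 0 < Nat.card H := Nat.card_pos
  rw [hkap]
  exact Nat.le_of_mul_le_mul_right hfinal hHpos

end LowerCore

/-- Corollary: in the hierarchical criterion, the assumption `|G₁/H| ≥ d₂` can be
replaced by `Hs₁⁻¹H ≠ Hs₁H`. -/
theorem stmt_14 {G : Type*} [Group G] [Finite G] [DecidableEq G] (H : Subgroup G)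
    (k : ℕ) (hk : 2 ≤ k) (s : ℕ → G)
    (hSH : ∀ i ∈ Finset.Icc 1 k, s i ∉ H)
    (hdc : ∀ i ∈ Finset.Icc 1 k, ∀ j ∈ Finset.Icc 1 k, i ≠ j →
      dcoset H (s i) ≠ dcoset H (s j))
    (hconn : SC (cayleyRel H (((Finset.Icc 1 k).image s : Finset G) : Set G)))
    (hhier : ∀ i ∈ Finset.Icc 1 k, ∀ j ∈ Finset.Icc 1 k, i ≠ j →
      towerGroup1 H s i ≠ towerGroup1 H s j)
    (hdeg : ∀ i, 1 ≤ i → i < k →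
      dval H (s (i + 1)) ≤ ∑ j ∈ Finset.Icc 1 i, dval H (s j))
    (hinv : dcoset H ((s 1)⁻¹) ≠ dcoset H (s 1)) :
    kappa (cayleyRel H (((Finset.Icc 1 k).image s : Finset G) : Set G)) =
      ∑ i ∈ Finset.Icc 1 k, dval H (s i) := by
  set S : Set G := (((Finset.Icc 1 k).image s : Finset G) : Set G) with hSdef
  set E := cayleyRel H S with hEdef
  have hSH' : ∀ i, 1 ≤ i → i ≤ k → s i ∉ H :=
    fun i h1 h2 => hSH i (Finset.mem_Icc.mpr ⟨h1, h2⟩)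
  have hdc' : ∀ i, 1 ≤ i → i ≤ k → ∀ j, 1 ≤ j → j ≤ k → i ≠ j →
      dcoset H (s i) ≠ dcoset H (s j) :=
    fun i h1 h2 j h3 h4 h5 =>
      hdc i (Finset.mem_Icc.mpr ⟨h1, h2⟩) j (Finset.mem_Icc.mpr ⟨h3, h4⟩) h5
  have hstrict : ∀ l, 1 ≤ l → l < k → towerGroup1 H s l ≠ towerGroup1 H s (l + 1) :=
    fun l h1 h2 => hhier l (Finset.mem_Icc.mpr ⟨h1, by omega⟩)
      (l + 1) (Finset.mem_Icc.mpr ⟨by omega, by omega⟩) (by omega)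
  have hdegset : ∀ i, 1 ≤ i → i < k →
      (dcoset H (s (i + 1))).ncard ≤ ∑ j ∈ Finset.Icc 1 i, (dcoset H (s j)).ncard := by
    intro i h1 h2
    have e1 := card_mk_image H (dcoset H (s (i + 1)))
      (fun u hu h hh => dcoset_mul_right hu hh)
    have e2 : (∑ j ∈ Finset.Icc 1 i, (dcoset H (s j)).ncard)
        = (∑ j ∈ Finset.Icc 1 i, dval H (s j)) * Nat.card H := by
      rw [Finset.sum_mul]
      exact Finset.sum_congr rfl
        (fun j _ => card_mk_image H _ (fun u hu h hh => dcoset_mul_right hu hh))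
    rw [e1, e2]
    exact Nat.mul_le_mul_right _ (hdeg i h1 h2)
  have hdegv : ∀ u : G, (Nout E {((u : G) : G ⧸ H)}).ncard
      = ∑ i ∈ Finset.Icc 1 k, dval H (s i) :=
    fun u => nout_singleton_card H k s hSH' hdc' u
  by_cases hcomp : ∀ x y : G ⧸ H, x ≠ y → E x y
  · -- complete digraph case
    have hguardneg : ¬ ∃ T : Set (G ⧸ H), ¬ SCOn E Tᶜ := by
      push_neg
      intro T a ha b hb
      by_cases hab : a = b
      · exact hab ▸ Relation.ReflTransGen.refl
      · exact Relation.ReflTransGen.single ⟨ha, hb, hcomp a b hab⟩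
    rw [kappa, if_neg hguardneg]
    have h1 : Nout E {((1 : G) : G ⧸ H)} = ({((1 : G) : G ⧸ H)}ᶜ : Set (G ⧸ H)) := by
      ext z
      constructor
      · rintro ⟨hz, _⟩
        exact hz
      · intro hz
        exact ⟨hz, ((1 : G) : G ⧸ H), rfl, hcomp _ _ (fun h => hz h.symm)⟩
    have h2 := Set.ncard_add_ncard_compl ({((1 : G) : G ⧸ H)} : Set (G ⧸ H))
    rw [Set.ncard_singleton] at h2
    have h3 := hdegv 1
    rw [h1] at h3
    omega
  · push_neg at hcomp
    obtain ⟨v, w, hvw, hnE⟩ := hcomp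
    obtain ⟨uv, rfl⟩ := QuotientGroup.mk_surjective v
    have hcut : ¬ SCOn E ({((uv : G) : G ⧸ H), w} : Set (G ⧸ H)) := by
      intro h
      have hr := h ((uv : G) : G ⧸ H) (by simp) w (by simp)
      have hconf : ∀ c, Relation.ReflTransGen
          (fun x y => x ∈ ({((uv : G) : G ⧸ H), w} : Set (G ⧸ H)) ∧
            y ∈ ({((uv : G) : G ⧸ H), w} : Set (G ⧸ H)) ∧ E x y) ((uv : G) : G ⧸ H) c →
          c = ((uv : G) : G ⧸ H) := by
        intro c hc
        induction hc with
        | refl => rfl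
        | @tail p q hpq hstep ih =>
          rcases Set.mem_insert_iff.mp hstep.2.1 with hq | hq
          · exact hq
          · exfalso
            have hq' : q = w := Set.mem_singleton_iff.mp hq
            have he := hstep.2.2
            rw [ih, hq'] at he
            exact hnE he
      exact hvw (hconf w hr).symm
    have hguard : ∃ T : Set (G ⧸ H), ¬ SCOn E Tᶜ :=
      ⟨({((uv : G) : G ⧸ H), w} : Set (G ⧸ H))ᶜ, by rwa [compl_compl]⟩
    have hpart : IsPart E {((uv : G) : G ⧸ H)} := by
      refine ⟨Set.singleton_nonempty _, ⟨w, ?_⟩⟩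
      rintro (hw | hw)
      · exact hvw (Set.mem_singleton_iff.mp hw).symm
      · obtain ⟨_, y, hy, he⟩ := hw
        rw [Set.mem_singleton_iff.mp hy] at he
        exact hnE he
    have hub : kappa E ≤ ∑ i ∈ Finset.Icc 1 k, dval H (s i) := by
      rw [← hdegv uv]
      exact kappa_le_of_part hpart
    have hflipguard : ∃ T : Set (G ⧸ H), ¬ SCOn (flipR E) Tᶜ := by
      obtain ⟨T, hT⟩ := hguard
      exact ⟨T, by rwa [scOn_flip]⟩
    have hSCflip : ∀ a b : G ⧸ H, Relation.ReflTransGen (flipR E) a b :=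
      fun a b => rtg_flip (hconn b a)
    have hequivE : ∀ (g : G) (x y : G ⧸ H), E (g • x) (g • y) ↔ E x y :=
      fun g x y => edge_smul H S g x y
    have hequivF : ∀ (g : G) (x y : G ⧸ H), (flipR E) (g • x) (g • y) ↔ (flipR E) x y :=
      fun g x y => edge_smul H S g y x
    have hlb : (∑ i ∈ Finset.Icc 1 k, dval H (s i)) ≤ kappa E := by
      by_cases hside : atomN E ≤ atomN (flipR E)
      · refine lower_core H k (by omega) s s hSH' hinv hstrict hdegset
          (fun j _ => Or.inl rfl) E (edge_iff H k s) hequivE hconn hguard ?_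
        intro F hF
        exact le_trans hside (atomN_le hF)
      · have hle : atomN (flipR E) ≤ atomN E := le_of_not_ge hside
        have hres := lower_core H k (by omega) s (fun j => (s j)⁻¹) hSH' hinv hstrict
          hdegset (fun j _ => Or.inr rfl) (flipR E) (edge_flip_iff H k s) hequivF
          hSCflip hflipguard ?_
        · rwa [kappa_flip] at hres
        · intro F hF
          have hF' : IsFrag E F := hF
          exact le_trans hle (atomN_le hF')
    exact le_antisymm hub hlb
end
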